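/- arXiv:2505.02790 — 5 statements merged into one kernel-verified Lean document; each statement's English description precedes it below -/
import Mathlib

section
/- (Calibration implies minimality.) Let W ⊆ U be open and let φ : W → ℝ be of class C¹ with ⟨dφ(q), Σⱼ hⱼ Xⱼ(q)⟩ ≤ |h| for every q ∈ W and h ∈ ℝᵐ. Let γ₀ : [a,b] → W be an admissible curve whose control h₀ satisfies |h₀(t)| = 1 and ⟨dφ(γ₀(t)), γ₀'(t)⟩ = 1 for a.e. t ∈ [a,b]. Then every admissible curve κ : [c,d] → W with κ(c) = γ₀(a) and κ(d) = γ₀(b) satisfies L(κ) ≥ b − a = L(γ₀); in particular γ₀ is length-minimizing among admissible curves that stay in W. -/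
open MeasureTheory Set
open scoped ENNReal

noncomputable section

abbrev Eu (n : ℕ) := EuclideanSpace ℝ (Fin n)

/-- `h` is a measurable control for the absolutely continuous curve `γ` on `[a,b]`. -/
def IsControlOf {n m : ℕ} (X : Fin m → Eu n → Eu n) (a b : ℝ)
    (γ : ℝ → Eu n) (h : ℝ → Eu m) : Prop :=
  AEMeasurable h (volume.restrict (Icc a b)) ∧
  IntegrableOn (fun t => ∑ j, h t j • X j (γ t)) (Icc a b) volume ∧
  ∀ t ∈ Icc a b, γ t = γ a + ∫ s in a..t, ∑ j, h s j • X j (γ s)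

/-- Length of a curve: infimum of `∫ |h|` over all measurable controls. -/
def ccLength {n m : ℕ} (X : Fin m → Eu n → Eu n) (a b : ℝ) (γ : ℝ → Eu n) : ℝ≥0∞ :=
  ⨅ (h : ℝ → Eu m) (_ : IsControlOf X a b γ h), ∫⁻ t in Icc a b, (‖h t‖₊ : ℝ≥0∞)

/-- Carnot–Carathéodory distance on `U`. -/
def ccDist {n m : ℕ} (X : Fin m → Eu n → Eu n) (U : Set (Eu n)) (p q : Eu n) : ℝ≥0∞ :=
  ⨅ (a : ℝ) (b : ℝ) (γ : ℝ → Eu n) (_ : a ≤ b) (_ : ∀ t ∈ Icc a b, γ t ∈ U)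
    (_ : γ a = p) (_ : γ b = q) (_ : ∃ h, IsControlOf X a b γ h),
    ccLength X a b γ

/-- CC ball of centre `q` and radius `r` inside `U`. -/
def ccBall {n m : ℕ} (X : Fin m → Eu n → Eu n) (U : Set (Eu n)) (q : Eu n) (r : ℝ) :
    Set (Eu n) :=
  {x ∈ U | ccDist X U q x < ENNReal.ofReal r}

/-- Diameter of a set with respect to the CC distance. -/
def ccDiam {n m : ℕ} (X : Fin m → Eu n → Eu n) (U : Set (Eu n)) (S : Set (Eu n)) : ℝ≥0∞ :=
  ⨆ (x ∈ S) (y ∈ S), ccDist X U x y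

/-- `f` is of class `C^{1,1}` on `U`: continuously differentiable with locally
Lipschitz derivative. -/
def IsC11On {n : ℕ} (f : Eu n → Eu n) (U : Set (Eu n)) : Prop :=
  ContDiffOn ℝ 1 f U ∧
  ∀ q ∈ U, ∃ (K : NNReal) (V : Set (Eu n)), V ∈ nhdsWithin q U ∧
    LipschitzOnWith K (fderiv ℝ f) V


set_option maxHeartbeats 1000000 in
/-- Fundamental theorem of calculus along an absolutely continuous curve, for a `C¹`
function `φ`, proved by a continuous-induction argument. -/
lemma calib_key {n : ℕ} {W : Set (Eu n)} (hW : IsOpen W) {φ : Eu n → ℝ}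
    (hφ : ContDiffOn ℝ 1 φ W) {c d : ℝ} (hcd : c ≤ d) {γ v : ℝ → Eu n}
    (hv : IntegrableOn v (Icc c d)) (hγ : ∀ t ∈ Icc c d, γ t = γ c + ∫ s in c..t, v s)
    (hγW : ∀ t ∈ Icc c d, γ t ∈ W) :
    IntegrableOn (fun s => fderiv ℝ φ (γ s) (v s)) (Icc c d) ∧
      φ (γ d) - φ (γ c) = ∫ s in c..d, fderiv ℝ φ (γ s) (v s) := by
  have huIcc : uIcc c d = Icc c d := uIcc_of_le hcd
  have hvu : IntegrableOn v (uIcc c d) := by rwa [huIcc]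
  have hvI : IntervalIntegrable v volume c d := hvu.intervalIntegrable
  -- continuity of γ on [c,d]
  have hprim : ContinuousOn (fun t => γ c + ∫ s in c..t, v s) (Icc c d) := by
    have := intervalIntegral.continuousOn_primitive_interval (a := c) (b := d) (μ := volume) hvu
    rw [huIcc] at this
    exact continuousOn_const.add this
  have hγcont : ContinuousOn γ (Icc c d) := hprim.congr hγ
  -- compact sets
  set K : Set (Eu n) := γ '' Icc c d with hKdef
  have hKco : IsCompact K := isCompact_Icc.image_of_continuousOn hγcont
  have hKW : K ⊆ W := by rintro _ ⟨t, ht, rfl⟩; exact hγW t ht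
  obtain ⟨ρ, hρ, hρW⟩ := hKco.exists_thickening_subset_open hW hKW
  set K' : Set (Eu n) := Metric.cthickening (ρ / 2) K with hK'def
  have hK'co : IsCompact K' := hKco.cthickening
  have hK'W : K' ⊆ W := (Metric.cthickening_subset_thickening' hρ (half_lt_self hρ) K).trans hρW
  have hKK' : K ⊆ K' := Metric.self_subset_cthickening K
  -- derivative of φ
  set A : Eu n → (Eu n →L[ℝ] ℝ) := fderiv ℝ φ with hAdef
  have hA : ContinuousOn A W := hφ.continuousOn_fderiv_of_isOpen hW le_rfl
  obtain ⟨M, hM⟩ := hK'co.exists_bound_of_continuousOn (hA.mono hK'W)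
  have hdiff : ∀ z ∈ W, DifferentiableAt ℝ φ z := fun z hz =>
    (hφ.differentiableOn one_ne_zero).differentiableAt (hW.mem_nhds hz)
  -- the integrand
  set w : ℝ → ℝ := fun s => A (γ s) (v s) with hwdef
  have hγK : ∀ t ∈ Icc c d, γ t ∈ K := fun t ht => mem_image_of_mem γ ht
  have hw : IntegrableOn w (Icc c d) := by
    have hAγ : ContinuousOn (fun s => A (γ s)) (Icc c d) :=
      hA.comp hγcont fun t ht => hγW t ht
    have hmeas : AEStronglyMeasurable w (volume.restrict (Icc c d)) := by
      have h1 := hAγ.aestronglyMeasurable (μ := volume) measurableSet_Icc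
      have h2 := hv.aestronglyMeasurable
      exact isBoundedBilinearMap_apply.continuous.comp_aestronglyMeasurable (h1.prodMk h2)
    refine Integrable.mono' (hv.norm.const_mul M) hmeas ?_
    filter_upwards [ae_restrict_mem measurableSet_Icc] with s hs
    calc ‖w s‖ ≤ ‖A (γ s)‖ * ‖v s‖ := (A (γ s)).le_opNorm _
      _ ≤ M * ‖v s‖ :=
        mul_le_mul_of_nonneg_right (hM _ (hKK' (hγK s hs))) (norm_nonneg _)
  have hwu : IntegrableOn w (uIcc c d) := by rwa [huIcc]
  have hwI : IntervalIntegrable w volume c d := hwu.intervalIntegrable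
  have hnvI : IntervalIntegrable (fun s => ‖v s‖) volume c d := hvI.norm
  refine ⟨hw, ?_⟩
  set C : ℝ := ∫ s in c..d, ‖v s‖ with hCdef
  have hC : 0 ≤ C := intervalIntegral.integral_nonneg hcd fun _ _ => norm_nonneg _
  -- main estimate for every ε > 0
  suffices h : ∀ ε > (0:ℝ), |φ (γ d) - φ (γ c) - ∫ s in c..d, w s| ≤ 2 * ε * C by
    have h0 : ∀ ε' > (0:ℝ), |φ (γ d) - φ (γ c) - ∫ s in c..d, w s| ≤ ε' := by
      intro ε' hε'
      rcases eq_or_lt_of_le hC with hC0 | hC0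
      · have := h 1 one_pos
        rw [← hC0] at this
        simpa using this.trans (by linarith)
      · calc |φ (γ d) - φ (γ c) - ∫ s in c..d, w s| ≤ 2 * (ε' / (2 * C)) * C :=
            h _ (by positivity)
          _ = ε' := by field_simp
    have h1 : |φ (γ d) - φ (γ c) - ∫ s in c..d, w s| ≤ 0 := by
      refine le_of_forall_pos_le_add ?_
      intro ε' hε'
      simpa using h0 ε' hε'
    have h2 : φ (γ d) - φ (γ c) - ∫ s in c..d, w s = 0 :=
      abs_eq_zero.mp (le_antisymm h1 (abs_nonneg _))
    linarith
  intro ε hε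
  -- uniform continuity of A on K'
  have hAuc := hK'co.uniformContinuousOn_of_continuous (hA.mono hK'W)
  rw [Metric.uniformContinuousOn_iff] at hAuc
  obtain ⟨δ₁, hδ₁, hδ₁'⟩ := hAuc ε hε
  set r : ℝ := min (ρ / 2) δ₁ with hrdef
  have hr : 0 < r := lt_min (half_pos hρ) hδ₁
  have hballK' : ∀ x ∈ K, Metric.ball x r ⊆ K' := by
    intro x hx y hy
    exact Metric.mem_cthickening_of_dist_le y x (ρ / 2) K hx
      ((Metric.mem_ball.mp hy).le.trans (min_le_left _ _))
  -- the functions F and G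
  set F : ℝ → ℝ := fun u => φ (γ u) - ∫ s in c..u, w s with hFdef
  set G : ℝ → ℝ := fun u => ∫ s in c..u, ‖v s‖ with hGdef
  have hFcont : ContinuousOn F (Icc c d) := by
    have h1 : ContinuousOn (fun u => φ (γ u)) (Icc c d) :=
      hφ.continuousOn.comp hγcont fun t ht => hγW t ht
    have h2 := intervalIntegral.continuousOn_primitive_interval (a := c) (b := d) (μ := volume) hwu
    rw [huIcc] at h2
    exact h1.sub h2
  have hGcont : ContinuousOn G (Icc c d) := by
    have h2 := intervalIntegral.continuousOn_primitive_interval (a := c) (b := d) (μ := volume)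
      (f := fun s => ‖v s‖) (by rw [huIcc]; exact hv.norm)
    rwa [huIcc] at h2
  set S : Set ℝ := {u ∈ Icc c d | |F u - F c| ≤ 2 * ε * G u} with hSdef
  have hsub : Icc c d ⊆ S ∪ Ioi d := by
    apply IsClosed.Icc_subset_of_forall_mem_nhdsWithin
    · have heq : (S ∪ Ioi d) ∩ Icc c d
          = Icc c d ∩ (fun u => |F u - F c| - 2 * ε * G u) ⁻¹' Iic 0 := by
        ext u
        simp only [hSdef, mem_inter_iff, mem_union, mem_sep_iff, mem_Ioi, mem_preimage, mem_Iic]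
        constructor
        · rintro ⟨hu1 | hu1, hu2⟩
          · exact ⟨hu2, by linarith [hu1.2]⟩
          · exact absurd hu2.2 (not_le.mpr hu1)
        · rintro ⟨hu1, hu2⟩
          exact ⟨Or.inl ⟨hu1, by linarith⟩, hu1⟩
      rw [heq]
      refine ContinuousOn.preimage_isClosed_of_isClosed ?_ isClosed_Icc isClosed_Iic
      exact ((hFcont.sub continuousOn_const).abs).sub (continuousOn_const.mul hGcont)
    · left
      refine ⟨left_mem_Icc.mpr hcd, ?_⟩
      simp [hFdef, hGdef, intervalIntegral.integral_same]
    · rintro t ⟨hts, htI⟩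
      have htIcc : t ∈ Icc c d := ⟨htI.1, htI.2.le⟩
      have htS : t ∈ S := by
        rcases hts with h' | h'
        · exact h'
        · exact absurd htI.2 (not_lt.mpr (le_of_lt h'))
      have hFt : |F t - F c| ≤ 2 * ε * G t := htS.2
      -- continuity of γ at t within Icc c d
      have hcw := hγcont t htIcc
      rw [Metric.continuousWithinAt_iff] at hcw
      obtain ⟨δ₂, hδ₂, hδ₂'⟩ := hcw r hr
      refine Filter.mem_of_superset (Ioo_mem_nhdsGT_of_mem ⟨le_refl t, lt_add_of_pos_right t hδ₂⟩) ?_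
      intro u hu
      by_cases hud : d < u
      · exact Or.inr hud
      push_neg at hud
      have huIcc' : u ∈ Icc c d := ⟨htIcc.1.trans hu.1.le, hud⟩
      have htu : t ≤ u := hu.1.le
      -- all points of γ [t,u] lie in ball (γ t) r
      have hseg : ∀ s ∈ Icc t u, γ s ∈ Metric.ball (γ t) r := by
        intro s hs
        have hsIcc : s ∈ Icc c d := ⟨htIcc.1.trans hs.1, hs.2.trans hud⟩
        have : dist s t < δ₂ := by
          rw [Real.dist_eq, abs_of_nonneg (by linarith [hs.1])]
          linarith [hs.2, hu.2]
        exact Metric.mem_ball.mpr (hδ₂' hsIcc this)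
      have hballsub := hballK' (γ t) (hγK t htIcc)
      have hballW : Metric.ball (γ t) r ⊆ W := hballsub.trans hK'W
      -- mean value estimate
      have hmvt : ‖φ (γ u) - φ (γ t) - A (γ t) (γ u - γ t)‖ ≤ ε * ‖γ u - γ t‖ := by
        refine (convex_ball (γ t) r).norm_image_sub_le_of_norm_fderiv_le'
          (fun z hz => hdiff z (hballW hz)) ?_ (Metric.mem_ball_self hr)
          (hseg u ⟨htu, le_refl u⟩)
        intro z hz
        have hzK' : z ∈ K' := hballsub hz
        have hd : dist z (γ t) < δ₁ := lt_of_lt_of_le (Metric.mem_ball.mp hz) (min_le_right _ _)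
        have := hδ₁' z hzK' (γ t) (hKK' (hγK t htIcc)) hd
        rw [dist_eq_norm] at this
        exact this.le
      -- sub-interval integrabilities
      have htmem : t ∈ uIcc c d := by rw [huIcc]; exact htIcc
      have humem : u ∈ uIcc c d := by rw [huIcc]; exact huIcc'
      have hcmem : c ∈ uIcc c d := left_mem_uIcc
      have hvtu : IntervalIntegrable v volume t u := hvI.mono_set (uIcc_subset_uIcc htmem humem)
      have hwtu : IntervalIntegrable w volume t u := hwI.mono_set (uIcc_subset_uIcc htmem humem)
      have hnvtu : IntervalIntegrable (fun s => ‖v s‖) volume t u :=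
        hnvI.mono_set (uIcc_subset_uIcc htmem humem)
      have hvct : IntervalIntegrable v volume c t := hvI.mono_set (uIcc_subset_uIcc hcmem htmem)
      have hvcu : IntervalIntegrable v volume c u := hvI.mono_set (uIcc_subset_uIcc hcmem humem)
      have hwct : IntervalIntegrable w volume c t := hwI.mono_set (uIcc_subset_uIcc hcmem htmem)
      have hwcu : IntervalIntegrable w volume c u := hwI.mono_set (uIcc_subset_uIcc hcmem humem)
      have hnvct : IntervalIntegrable (fun s => ‖v s‖) volume c t :=
        hnvI.mono_set (uIcc_subset_uIcc hcmem htmem)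
      have hnvcu : IntervalIntegrable (fun s => ‖v s‖) volume c u :=
        hnvI.mono_set (uIcc_subset_uIcc hcmem humem)
      -- γ u - γ t = ∫ t..u v
      have hγdiff : γ u - γ t = ∫ s in t..u, v s := by
        rw [hγ u huIcc', hγ t htIcc,
          ← intervalIntegral.integral_interval_sub_left hvcu hvct]
        abel
      have hGdiff : (∫ s in t..u, ‖v s‖) = G u - G t :=
        (intervalIntegral.integral_interval_sub_left hnvcu hnvct).symm
      have hnormle : ‖γ u - γ t‖ ≤ G u - G t := by
        rw [hγdiff, ← hGdiff]
        exact intervalIntegral.norm_integral_le_integral_norm htu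
      have hAv : IntervalIntegrable (fun s => A (γ t) (v s)) volume t u :=
        ⟨(A (γ t)).integrable_comp hvtu.1, (A (γ t)).integrable_comp hvtu.2⟩
      -- error term 2
      have herr2 : ‖(∫ s in t..u, A (γ t) (v s)) - ∫ s in t..u, w s‖ ≤ ε * (G u - G t) := by
        rw [← intervalIntegral.integral_sub hAv hwtu]
        have hb : ∀ᵐ s ∂volume.restrict (uIoc t u), ‖A (γ t) (v s) - w s‖ ≤ ε * ‖v s‖ := by
          rw [uIoc_of_le htu]
          filter_upwards [ae_restrict_mem measurableSet_Ioc] with s hs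
          have hsseg : γ s ∈ Metric.ball (γ t) r := hseg s ⟨hs.1.le, hs.2⟩
          have hsK' : γ s ∈ K' := hballsub hsseg
          have hd : dist (γ t) (γ s) < δ₁ := by
            rw [dist_comm]
            exact lt_of_lt_of_le (Metric.mem_ball.mp hsseg) (min_le_right _ _)
          have hAle : ‖A (γ t) - A (γ s)‖ ≤ ε := by
            have := hδ₁' (γ t) (hKK' (hγK t htIcc)) (γ s) hsK' hd
            rw [dist_eq_norm] at this
            exact this.le
          calc ‖A (γ t) (v s) - w s‖ = ‖(A (γ t) - A (γ s)) (v s)‖ := by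
                simp [hwdef, ContinuousLinearMap.sub_apply]
            _ ≤ ‖A (γ t) - A (γ s)‖ * ‖v s‖ := (A (γ t) - A (γ s)).le_opNorm _
            _ ≤ ε * ‖v s‖ := mul_le_mul_of_nonneg_right hAle (norm_nonneg _)
        have hle := intervalIntegral.norm_integral_le_of_norm_le htu
          ((ae_restrict_iff' measurableSet_Ioc).mp (by rwa [uIoc_of_le htu] at hb)) (hnvtu.const_mul ε)
        rw [intervalIntegral.integral_const_mul] at hle
        have hInn : 0 ≤ ∫ s in t..u, ‖v s‖ :=
          intervalIntegral.integral_nonneg htu fun _ _ => norm_nonneg _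
        rw [hGdiff] at hle
        exact hle
      -- assemble
      have hFut : F u - F t = (φ (γ u) - φ (γ t)) - ∫ s in t..u, w s := by
        simp only [hFdef]
        rw [← intervalIntegral.integral_interval_sub_left hwcu hwct]
        ring
      have hclm : (∫ s in t..u, A (γ t) (v s)) = A (γ t) (γ u - γ t) := by
        rw [hγdiff]
        exact (A (γ t)).intervalIntegral_comp_comm hvtu
      have hFle : |F u - F t| ≤ 2 * ε * (G u - G t) := by
        rw [hFut]
        have hsplit : (φ (γ u) - φ (γ t)) - (∫ s in t..u, w s)
            = (φ (γ u) - φ (γ t) - A (γ t) (γ u - γ t))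
              + ((∫ s in t..u, A (γ t) (v s)) - ∫ s in t..u, w s) := by
          rw [hclm]; ring
        rw [hsplit]
        calc |(φ (γ u) - φ (γ t) - A (γ t) (γ u - γ t))
              + ((∫ s in t..u, A (γ t) (v s)) - ∫ s in t..u, w s)|
            ≤ |φ (γ u) - φ (γ t) - A (γ t) (γ u - γ t)|
              + |(∫ s in t..u, A (γ t) (v s)) - ∫ s in t..u, w s| := abs_add_le _ _
          _ ≤ ε * ‖γ u - γ t‖ + ε * (G u - G t) := by
              rw [← Real.norm_eq_abs, ← Real.norm_eq_abs]
              exact add_le_add hmvt herr2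
          _ ≤ 2 * ε * (G u - G t) := by nlinarith [hnormle, hε.le]
      left
      refine ⟨huIcc', ?_⟩
      calc |F u - F c| ≤ |F u - F t| + |F t - F c| := abs_sub_le _ _ _
        _ ≤ 2 * ε * (G u - G t) + 2 * ε * G t := add_le_add hFle hFt
        _ = 2 * ε * G u := by ring
  have hdm : d ∈ S ∪ Ioi d := hsub (right_mem_Icc.mpr hcd)
  have hdS : d ∈ S := by
    rcases hdm with h' | h'
    · exact h'
    · exact absurd h' (lt_irrefl d)
  have hfin := hdS.2
  simp only [hFdef, hGdef, intervalIntegral.integral_same, sub_zero] at hfin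
  calc |φ (γ d) - φ (γ c) - ∫ s in c..d, w s|
      = |φ (γ d) - (∫ s in c..d, w s) - φ (γ c)| := by ring_nf
    _ ≤ 2 * ε * C := hfin

/-- **A calibration implies length-minimality**: if `φ` is `C¹` on the open set
`W ⊆ U` with `⟨dφ(q), Σⱼ hⱼ Xⱼ(q)⟩ ≤ |h|` on `W`, and `γ₀ : [a,b] → W` is an
admissible curve whose control `h₀` satisfies `|h₀(t)| = 1` and
`⟨dφ(γ₀(t)), γ₀'(t)⟩ = 1` a.e., then `L(γ₀) = b - a` and every admissible curve
in `W` with the same endpoints has length at least `b - a`. -/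
theorem calibration_implies_minimality
    (n m : ℕ) (hm : 1 ≤ m) (hmn : m ≤ n)
    (U : Set (Eu n)) (hU : IsOpen U)
    (X : Fin m → Eu n → Eu n)
    (hX : ∀ j, IsC11On (X j) U)
    (hindep : ∀ q ∈ U, LinearIndependent ℝ (fun j => X j q))
    (W : Set (Eu n)) (hW : IsOpen W) (hWU : W ⊆ U)
    (φ : Eu n → ℝ) (hφ : ContDiffOn ℝ 1 φ W)
    (hcal : ∀ q ∈ W, ∀ h : Eu m, fderiv ℝ φ q (∑ j, h j • X j q) ≤ ‖h‖)
    (a b : ℝ) (hab : a ≤ b)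
    (γ₀ : ℝ → Eu n) (h₀ : ℝ → Eu m)
    (hγ₀W : ∀ t ∈ Icc a b, γ₀ t ∈ W)
    (hctrl : IsControlOf X a b γ₀ h₀)
    (hae : ∀ᵐ t ∂(volume.restrict (Icc a b)),
      ‖h₀ t‖ = 1 ∧ fderiv ℝ φ (γ₀ t) (∑ j, h₀ t j • X j (γ₀ t)) = 1) :
    ccLength X a b γ₀ = ENNReal.ofReal (b - a) ∧
    ∀ (c d : ℝ) (κ : ℝ → Eu n), c ≤ d →
      (∀ t ∈ Icc c d, κ t ∈ W) →
      (∃ hκ, IsControlOf X c d κ hκ) →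
      κ c = γ₀ a → κ d = γ₀ b →
      ENNReal.ofReal (b - a) ≤ ccLength X c d κ := by
  obtain ⟨hmeas₀, hint₀, hform₀⟩ := hctrl
  obtain ⟨hw₀int, heq₀⟩ := calib_key hW hφ hab hint₀ hform₀ hγ₀W
  -- the general lower bound coming from the calibration
  have key2 : ∀ (c₁ d₁ : ℝ), c₁ ≤ d₁ → ∀ (κ₁ : ℝ → Eu n) (g : ℝ → Eu m),
      (∀ t ∈ Icc c₁ d₁, κ₁ t ∈ W) → IsControlOf X c₁ d₁ κ₁ g →
      ENNReal.ofReal (φ (κ₁ d₁) - φ (κ₁ c₁)) ≤ ∫⁻ t in Icc c₁ d₁, (‖g t‖₊ : ℝ≥0∞) := by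
    rintro c₁ d₁ hcd₁ κ₁ g hκW ⟨hgmeas, hgint, hgfor⟩
    by_cases hL : (∫⁻ t in Icc c₁ d₁, (‖g t‖₊ : ℝ≥0∞)) = ⊤
    · rw [hL]; exact le_top
    have hgnorm : IntegrableOn (fun t => ‖g t‖) (Icc c₁ d₁) := by
      refine ⟨hgmeas.norm.aestronglyMeasurable, ?_⟩
      rw [hasFiniteIntegral_def]
      simpa [nnnorm_norm, enorm_eq_nnnorm] using lt_top_iff_ne_top.mpr hL
    obtain ⟨hwint, heq⟩ := calib_key hW hφ hcd₁ hgint hgfor hκW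
    have huIcc : uIcc c₁ d₁ = Icc c₁ d₁ := uIcc_of_le hcd₁
    have hwI : IntervalIntegrable
        (fun s => fderiv ℝ φ (κ₁ s) (∑ j, g s j • X j (κ₁ s))) volume c₁ d₁ := by
      rw [← huIcc] at hwint; exact hwint.intervalIntegrable
    have hgI : IntervalIntegrable (fun t => ‖g t‖) volume c₁ d₁ := by
      rw [← huIcc] at hgnorm; exact hgnorm.intervalIntegrable
    have hle : (∫ s in c₁..d₁, fderiv ℝ φ (κ₁ s) (∑ j, g s j • X j (κ₁ s)))
        ≤ ∫ s in c₁..d₁, ‖g s‖ :=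
      intervalIntegral.integral_mono_on hcd₁ hwI hgI fun s hs => hcal (κ₁ s) (hκW s hs) (g s)
    rw [heq]
    calc ENNReal.ofReal (∫ s in c₁..d₁, fderiv ℝ φ (κ₁ s) (∑ j, g s j • X j (κ₁ s)))
        ≤ ENNReal.ofReal (∫ s in c₁..d₁, ‖g s‖) := ENNReal.ofReal_le_ofReal hle
      _ = ∫⁻ t in Icc c₁ d₁, (‖g t‖₊ : ℝ≥0∞) := by
          rw [intervalIntegral.integral_of_le hcd₁, ← integral_Icc_eq_integral_Ioc,
            ofReal_integral_eq_lintegral_ofReal hgnorm (ae_of_all _ fun t => norm_nonneg _)]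
          simp_rw [ofReal_norm_eq_enorm, enorm_eq_nnnorm]
  -- the calibration identity along γ₀
  have hφ₀ : φ (γ₀ b) - φ (γ₀ a) = b - a := by
    rw [heq₀, intervalIntegral.integral_of_le hab]
    have hae2 : ∀ᵐ t ∂volume.restrict (Ioc a b),
        fderiv ℝ φ (γ₀ t) (∑ j, h₀ t j • X j (γ₀ t)) = 1 :=
      ae_restrict_of_ae_restrict_of_subset Ioc_subset_Icc_self (hae.mono fun t ht => ht.2)
    rw [integral_congr_ae hae2]
    simp [Real.volume_Ioc, ENNReal.toReal_ofReal (sub_nonneg.mpr hab), hab]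
  constructor
  · refine le_antisymm ?_ ?_
    · have hup : ccLength X a b γ₀ ≤ ∫⁻ t in Icc a b, (‖h₀ t‖₊ : ℝ≥0∞) := by
        simp only [ccLength]
        exact iInf₂_le h₀ ⟨hmeas₀, hint₀, hform₀⟩
      refine hup.trans_eq ?_
      have h1 : ∀ᵐ t ∂volume.restrict (Icc a b), (‖h₀ t‖₊ : ℝ≥0∞) = 1 := by
        filter_upwards [hae] with t ht
        rw [← enorm_eq_nnnorm, ← ofReal_norm_eq_enorm, ht.1]
        simp
      rw [lintegral_congr_ae h1, setLIntegral_one, Real.volume_Icc]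
    · simp only [ccLength]
      refine le_iInf fun g => le_iInf fun hc => ?_
      rw [← hφ₀]
      exact key2 a b hab γ₀ g hγ₀W hc
  · intro c d κ hcd hκW _hex hκc hκd
    simp only [ccLength]
    refine le_iInf fun g => le_iInf fun hc => ?_
    have := key2 c d hcd κ g hκW hc
    rwa [hκd, hκc, hφ₀] at this


end
end

section
/- (Calibrated integral curves realize the CC distance.) Let W ⊆ U be open and let φ : W → ℝ be of class C¹ with ⟨dφ(q'), Σⱼ hⱼ Xⱼ(q')⟩ ≤ |h| for all q' ∈ W, h ∈ ℝᵐ, and Σᵢ ⟨dφ(q'), Xᵢ(q')⟩² = 1 for all q' ∈ W; set Y(q') := Σᵢ ⟨dφ(q'), Xᵢ(q')⟩ Xᵢ(q'). Suppose q ∈ W and r̄ > 0 satisfy B(q, 2r̄) ⊆ W, and let γ₀ : (−r̄/2, r̄/2) → W be an integral curve of Y with γ₀(0) = q. Then d(γ₀(s), γ₀(t)) = |t − s| for all s, t ∈ (−r̄/2, r̄/2). -/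
open MeasureTheory Set
open scoped ENNReal

noncomputable section

set_option maxHeartbeats 2000000

section AuxLemmas

variable {n m : ℕ}

lemma ccDist_le_lintegral (X : Fin m → Eu n → Eu n) (U : Set (Eu n))
    {a b : ℝ} {γ : ℝ → Eu n} {h : ℝ → Eu m}
    (hab : a ≤ b) (hmem : ∀ u ∈ Icc a b, γ u ∈ U)
    (hc : IsControlOf X a b γ h) :
    ccDist X U (γ a) (γ b) ≤ ∫⁻ t in Icc a b, (‖h t‖₊ : ℝ≥0∞) := by
  have h1 : ccLength X a b γ ≤ ∫⁻ t in Icc a b, (‖h t‖₊ : ℝ≥0∞) := by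
    unfold ccLength
    exact iInf₂_le h hc
  have h2 : ccDist X U (γ a) (γ b) ≤ ccLength X a b γ := by
    unfold ccDist
    refine iInf_le_of_le a ?_
    refine iInf_le_of_le b ?_
    refine iInf_le_of_le γ ?_
    refine iInf_le_of_le hab ?_
    refine iInf_le_of_le hmem ?_
    refine iInf_le_of_le rfl ?_
    refine iInf_le_of_le rfl ?_
    exact iInf_le _ ⟨h, hc⟩
  exact h2.trans h1

lemma IsControlOf.restrict {X : Fin m → Eu n → Eu n} {a b u : ℝ} {γ : ℝ → Eu n} {h : ℝ → Eu m}
    (hc : IsControlOf X a b γ h) (hu : u ∈ Icc a b) : IsControlOf X a u γ h := by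
  obtain ⟨h1, h2, h3⟩ := hc
  exact ⟨h1.mono_measure (Measure.restrict_mono (Icc_subset_Icc le_rfl hu.2) le_rfl),
    h2.mono_set (Icc_subset_Icc le_rfl hu.2),
    fun w hw => h3 w ⟨hw.1, hw.2.trans hu.2⟩⟩

lemma ccDist_le_concat (X : Fin m → Eu n → Eu n) (U : Set (Eu n))
    {a₁ b₁ a₂ b₂ : ℝ} {γ₁ γ₂ : ℝ → Eu n} {h₁ h₂ : ℝ → Eu m}
    (hab₁ : a₁ ≤ b₁) (hab₂ : a₂ ≤ b₂)
    (hm₁ : ∀ u ∈ Icc a₁ b₁, γ₁ u ∈ U) (hm₂ : ∀ u ∈ Icc a₂ b₂, γ₂ u ∈ U)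
    (hc₁ : IsControlOf X a₁ b₁ γ₁ h₁) (hc₂ : IsControlOf X a₂ b₂ γ₂ h₂)
    (hglue : γ₁ b₁ = γ₂ a₂) :
    ccDist X U (γ₁ a₁) (γ₂ b₂) ≤
      (∫⁻ t in Icc a₁ b₁, (‖h₁ t‖₊ : ℝ≥0∞)) + ∫⁻ t in Icc a₂ b₂, (‖h₂ t‖₊ : ℝ≥0∞) := by
  set d : ℝ := a₂ - b₁ with hd
  set c : ℝ := b₁ + (b₂ - a₂) with hcdef
  have hbc : b₁ ≤ c := by rw [hcdef]; linarith
  have hac : a₁ ≤ c := hab₁.trans hbc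
  set η : ℝ → Eu n := fun u => if u ≤ b₁ then γ₁ u else γ₂ (u + d) with hη
  set hctl : ℝ → Eu m := fun u => if u ≤ b₁ then h₁ u else h₂ (u + d) with hhctl
  have hbd : b₁ + d = a₂ := by rw [hd]; ring
  have hcd : c + d = b₂ := by rw [hcdef, hd]; ring
  have hη₁ : ∀ u, u ≤ b₁ → η u = γ₁ u := fun u hu => by simp [hη, hu]
  have hhctl₁ : ∀ u, u ≤ b₁ → hctl u = h₁ u := fun u hu => by simp [hhctl, hu]
  have hη₂ : ∀ u, b₁ ≤ u → η u = γ₂ (u + d) := by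
    intro u hu
    by_cases h' : u ≤ b₁
    · have hub : u = b₁ := le_antisymm h' hu
      subst hub
      rw [hη₁ u le_rfl, show u + d = a₂ from hbd]
      exact hglue
    · simp [hη, h']
  have hhctl₂ : ∀ u, b₁ < u → hctl u = h₂ (u + d) := fun u hu => by simp [hhctl, not_le.2 hu]
  have hηa : η a₁ = γ₁ a₁ := hη₁ a₁ hab₁
  have hηc : η c = γ₂ b₂ := by rw [hη₂ c hbc, hcd]
  have hpreIcc : (fun x : ℝ => x + d) ⁻¹' (Icc a₂ b₂) = Icc b₁ c := by
    rw [preimage_add_const_Icc]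
    have e1 : a₂ - d = b₁ := by rw [hd]; ring
    have e2 : b₂ - d = c := by rw [hd, hcdef]; ring
    rw [e1, e2]
  have hpreIoc : (fun x : ℝ => x + d) ⁻¹' (Ioc a₂ b₂) = Ioc b₁ c := by
    rw [preimage_add_const_Ioc]
    have e1 : a₂ - d = b₁ := by rw [hd]; ring
    have e2 : b₂ - d = c := by rw [hd, hcdef]; ring
    rw [e1, e2]
  have mpIcc : MeasurePreserving (fun x : ℝ => x + d)
      (volume.restrict (Icc b₁ c)) (volume.restrict (Icc a₂ b₂)) := by
    have := (measurePreserving_add_right volume d).restrict_preimage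
      (measurableSet_Icc (a := a₂) (b := b₂))
    rwa [hpreIcc] at this
  have mpIoc : MeasurePreserving (fun x : ℝ => x + d)
      (volume.restrict (Ioc b₁ c)) (volume.restrict (Ioc a₂ b₂)) := by
    have := (measurePreserving_add_right volume d).restrict_preimage
      (measurableSet_Ioc (a := a₂) (b := b₂))
    rwa [hpreIoc] at this
  have hemb : MeasurableEmbedding (fun x : ℝ => x + d) :=
    (Homeomorph.addRight d).measurableEmbedding
  have hcover : Icc a₁ c ⊆ Icc a₁ b₁ ∪ Icc b₁ c := by
    intro w hw
    by_cases h' : w ≤ b₁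
    · exact Or.inl ⟨hw.1, h'⟩
    · exact Or.inr ⟨(not_le.1 h').le, hw.2⟩
  have hmemη : ∀ u ∈ Icc a₁ c, η u ∈ U := by
    intro u hu
    by_cases h' : u ≤ b₁
    · rw [hη₁ u h']; exact hm₁ u ⟨hu.1, h'⟩
    · push_neg at h'
      rw [hη₂ u h'.le]
      exact hm₂ (u + d) ⟨by rw [← hbd]; linarith, by rw [← hcd]; linarith [hu.2]⟩
  have hne : ∀ᵐ u ∂(volume.restrict (Icc b₁ c)), u ≠ b₁ := by
    rw [ae_iff]
    have e : {u : ℝ | ¬ u ≠ b₁} = {b₁} := by ext x; simp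
    rw [e, Measure.restrict_apply (measurableSet_singleton _)]
    exact measure_mono_null inter_subset_left (measure_singleton b₁)
  have hneIoc : ∀ u ∈ Ioc b₁ c, b₁ < u := fun u hu => hu.1
  -- measurability of the glued control
  have hmeas : AEMeasurable hctl (volume.restrict (Icc a₁ c)) := by
    refine AEMeasurable.mono_measure ?_
      ((Measure.restrict_mono hcover le_rfl).trans (Measure.restrict_union_le _ _))
    refine AEMeasurable.add_measure ?_ ?_
    · refine hc₁.1.congr ?_
      filter_upwards [ae_restrict_mem measurableSet_Icc] with u hu
      exact (hhctl₁ u hu.2).symm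
    · have hbase : AEMeasurable (fun u : ℝ => h₂ (u + d)) (volume.restrict (Icc b₁ c)) := by
        have h2m := hc₂.1
        rw [← mpIcc.map_eq] at h2m
        exact h2m.comp_measurable (measurable_add_const d)
      refine hbase.congr ?_
      filter_upwards [hne, ae_restrict_mem measurableSet_Icc] with u hu hmemu
      exact (hhctl₂ u (lt_of_le_of_ne hmemu.1 (Ne.symm hu))).symm
  -- integrability of the glued integrand
  set V : ℝ → Eu n := fun u => ∑ j, hctl u j • X j (η u) with hV
  have hVeq₁ : ∀ u, u ≤ b₁ → V u = ∑ j, h₁ u j • X j (γ₁ u) := by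
    intro u hu; rw [hV]; simp only; rw [hhctl₁ u hu, hη₁ u hu]
  have hVeq₂ : ∀ u, b₁ < u → V u = ∑ j, h₂ (u + d) j • X j (γ₂ (u + d)) := by
    intro u hu; rw [hV]; simp only; rw [hhctl₂ u hu, hη₂ u hu.le]
  have hii₂' : IntervalIntegrable (fun u => ∑ j, h₂ u j • X j (γ₂ u)) volume a₂ b₂ :=
    (intervalIntegrable_iff_integrableOn_Icc_of_le hab₂).2 hc₂.2.1
  have hii₂ : IntervalIntegrable (fun u => ∑ j, h₂ (u + d) j • X j (γ₂ (u + d))) volume b₁ c := by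
    have h' := hii₂'.comp_add_right d
    have e1 : a₂ - d = b₁ := by rw [hd]; ring
    have e2 : b₂ - d = c := by rw [hd, hcdef]; ring
    rwa [e1, e2] at h'
  have hIntV : IntegrableOn V (Icc a₁ c) volume := by
    refine (IntegrableOn.union ?_ ?_).mono_set hcover
    · exact hc₁.2.1.congr_fun (fun u hu => (hVeq₁ u hu.2).symm) measurableSet_Icc
    · have base : IntegrableOn (fun u => ∑ j, h₂ (u + d) j • X j (γ₂ (u + d))) (Icc b₁ c) volume :=
        (intervalIntegrable_iff_integrableOn_Icc_of_le hbc).1 hii₂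
      refine base.congr ?_
      filter_upwards [hne, ae_restrict_mem measurableSet_Icc] with u hu hmemu
      exact (hVeq₂ u (lt_of_le_of_ne hmemu.1 (Ne.symm hu))).symm
  have hiiV : ∀ p p', a₁ ≤ p → p ≤ p' → p' ≤ c → IntervalIntegrable V volume p p' :=
    fun p p' hp hpp' hp'c =>
      (intervalIntegrable_iff_integrableOn_Icc_of_le hpp').2
        (hIntV.mono_set (Icc_subset_Icc hp hp'c))
  -- the integral identity for the glued curve
  have hident : ∀ u ∈ Icc a₁ c, η u = η a₁ + ∫ w in a₁..u, V w := by
    intro u hu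
    by_cases h' : u ≤ b₁
    · have e1 : ∫ w in a₁..u, V w = ∫ w in a₁..u, ∑ j, h₁ w j • X j (γ₁ w) := by
        apply intervalIntegral.integral_congr
        intro w hw
        rw [uIcc_of_le hu.1] at hw
        exact hVeq₁ w (hw.2.trans h')
      rw [e1, hηa, hη₁ u h']
      exact hc₁.2.2 u ⟨hu.1, h'⟩
    · push_neg at h'
      have hudb : u + d ∈ Icc a₂ b₂ := ⟨by rw [← hbd]; linarith, by rw [← hcd]; linarith [hu.2]⟩
      have hγ₂id := hc₂.2.2 (u + d) hudb
      have e3 : ∫ w in b₁..u, (∑ j, h₂ (w + d) j • X j (γ₂ (w + d))) =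
          ∫ w in a₂..(u + d), ∑ j, h₂ w j • X j (γ₂ w) := by
        rw [intervalIntegral.integral_comp_add_right (fun w => ∑ j, h₂ w j • X j (γ₂ w)) d, hbd]
      have e4 : ∫ w in b₁..u, V w = ∫ w in b₁..u, ∑ j, h₂ (w + d) j • X j (γ₂ (w + d)) := by
        apply intervalIntegral.integral_congr_ae
        apply ae_of_all
        intro w hw
        rw [uIoc_of_le h'.le] at hw
        exact hVeq₂ w hw.1
      have e5 := intervalIntegral.integral_add_adjacent_intervals
        (hiiV a₁ b₁ le_rfl hab₁ hbc) (hiiV b₁ u hab₁ h'.le hu.2)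
      have e6 : ∫ w in a₁..b₁, V w = ∫ w in a₁..b₁, ∑ j, h₁ w j • X j (γ₁ w) := by
        apply intervalIntegral.integral_congr
        intro w hw
        rw [uIcc_of_le hab₁] at hw
        exact hVeq₁ w hw.2
      have hb₁id := hc₁.2.2 b₁ ⟨hab₁, le_rfl⟩
      calc η u = γ₂ (u + d) := hη₂ u h'.le
        _ = γ₂ a₂ + ∫ w in a₂..(u + d), ∑ j, h₂ w j • X j (γ₂ w) := hγ₂id
        _ = γ₁ b₁ + ∫ w in b₁..u, V w := by rw [← hglue, ← e3, ← e4]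
        _ = (γ₁ a₁ + ∫ w in a₁..b₁, ∑ j, h₁ w j • X j (γ₁ w)) + ∫ w in b₁..u, V w := by
            rw [← hb₁id]
        _ = η a₁ + ((∫ w in a₁..b₁, V w) + ∫ w in b₁..u, V w) := by rw [hηa, ← e6, add_assoc]
        _ = η a₁ + ∫ w in a₁..u, V w := by rw [e5]
  have hctrl : IsControlOf X a₁ c η hctl := ⟨hmeas, hIntV, hident⟩
  -- the lintegral bound
  have hsplit : Icc a₁ b₁ ∪ Ioc b₁ c = Icc a₁ c := Icc_union_Ioc_eq_Icc hab₁ hbc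
  have hdisj : Disjoint (Icc a₁ b₁) (Ioc b₁ c) := by
    rw [Set.disjoint_left]
    intro w hw hw'
    exact absurd hw.2 (not_le.2 hw'.1)
  have hlinsplit : (∫⁻ t in Icc a₁ c, (‖hctl t‖₊ : ℝ≥0∞)) =
      (∫⁻ t in Icc a₁ b₁, (‖hctl t‖₊ : ℝ≥0∞)) + ∫⁻ t in Ioc b₁ c, (‖hctl t‖₊ : ℝ≥0∞) := by
    rw [← hsplit, lintegral_union measurableSet_Ioc hdisj]
  have hl1 : (∫⁻ t in Icc a₁ b₁, (‖hctl t‖₊ : ℝ≥0∞)) = ∫⁻ t in Icc a₁ b₁, (‖h₁ t‖₊ : ℝ≥0∞) :=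
    setLIntegral_congr_fun_ae measurableSet_Icc (ae_of_all _ fun u hu => by rw [hhctl₁ u hu.2])
  have hl2 : (∫⁻ t in Ioc b₁ c, (‖hctl t‖₊ : ℝ≥0∞)) = ∫⁻ t in Ioc a₂ b₂, (‖h₂ t‖₊ : ℝ≥0∞) := by
    have e : (∫⁻ t in Ioc b₁ c, (‖hctl t‖₊ : ℝ≥0∞)) = ∫⁻ t in Ioc b₁ c, (‖h₂ (t + d)‖₊ : ℝ≥0∞) :=
      setLIntegral_congr_fun_ae measurableSet_Ioc (ae_of_all _ fun u hu => by rw [hhctl₂ u hu.1])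
    rw [e]
    exact mpIoc.lintegral_comp_emb hemb (fun x => (‖h₂ x‖₊ : ℝ≥0∞))
  calc ccDist X U (γ₁ a₁) (γ₂ b₂) = ccDist X U (η a₁) (η c) := by rw [hηa, hηc]
    _ ≤ ∫⁻ t in Icc a₁ c, (‖hctl t‖₊ : ℝ≥0∞) := ccDist_le_lintegral X U hac hmemη hctrl
    _ = (∫⁻ t in Icc a₁ b₁, (‖h₁ t‖₊ : ℝ≥0∞)) + ∫⁻ t in Ioc a₂ b₂, (‖h₂ t‖₊ : ℝ≥0∞) := by
        rw [hlinsplit, hl1, hl2]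
    _ ≤ (∫⁻ t in Icc a₁ b₁, (‖h₁ t‖₊ : ℝ≥0∞)) + ∫⁻ t in Icc a₂ b₂, (‖h₂ t‖₊ : ℝ≥0∞) :=
        add_le_add le_rfl (lintegral_mono_set Ioc_subset_Icc_self)

lemma exists_cal_path (X : Fin m → Eu n → Eu n)
    (W : Set (Eu n)) (hW : IsOpen W)
    (hXc : ∀ j, ContinuousOn (X j) W)
    (φ : Eu n → ℝ) (hφ : ContDiffOn ℝ 1 φ W)
    (hham : ∀ q' ∈ W, ∑ i, (fderiv ℝ φ q' (X i q')) ^ 2 = 1)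
    (rbar : ℝ) (γ₀ : ℝ → Eu n)
    (hγ₀W : ∀ t ∈ Ioo (-(rbar / 2)) (rbar / 2), γ₀ t ∈ W)
    (hγ₀ : ∀ t ∈ Ioo (-(rbar / 2)) (rbar / 2),
      HasDerivAt γ₀ (∑ i, fderiv ℝ φ (γ₀ t) (X i (γ₀ t)) • X i (γ₀ t)) t)
    (s t : ℝ) (hs : s ∈ Ioo (-(rbar / 2)) (rbar / 2)) (ht : t ∈ Ioo (-(rbar / 2)) (rbar / 2)) :
    ∃ γ h, IsControlOf X 0 |t - s| γ h ∧ γ 0 = γ₀ s ∧ γ (|t - s|) = γ₀ t ∧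
      (∀ u ∈ Icc (0:ℝ) |t - s|, γ u ∈ W) ∧
      (∫⁻ u in Icc (0:ℝ) |t - s|, (‖h u‖₊ : ℝ≥0∞)) = ENNReal.ofReal |t - s| := by
  by_cases hts : t = s
  · subst hts
    have habs : |t - t| = 0 := by simp
    refine ⟨fun _ => γ₀ t, fun _ => (0 : Eu m), ⟨aemeasurable_const, ?_, ?_⟩, rfl, rfl, ?_, ?_⟩
    · have : (fun u : ℝ => ∑ j, (0 : Eu m) j • X j (γ₀ t)) = fun _ => (0 : Eu n) := by
        funext u; simp
      rw [this]
      exact integrableOn_zero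
    · intro u hu
      rw [habs] at hu
      have : u = 0 := le_antisymm hu.2 hu.1
      subst this
      simp
    · intro u hu
      exact hγ₀W t ht
    · rw [habs]
      simp
  -- main case
  · have hL : 0 < |t - s| := abs_pos.2 (sub_ne_zero.2 hts)
    set L : ℝ := |t - s| with hLdef
    set σ : ℝ := (t - s) / L with hσdef
    have hσL : σ * L = t - s := div_mul_cancel₀ _ hL.ne'
    have hσabs : |σ| = 1 := by
      rw [hσdef, abs_div, hLdef, abs_abs, div_self hL.ne']
    have hσsq : σ ^ 2 = 1 := by rw [← sq_abs, hσabs, one_pow]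
    have hmem : ∀ u ∈ Icc (0:ℝ) L, s + σ * u ∈ Ioo (-(rbar / 2)) (rbar / 2) := by
      intro u hu
      rcases abs_cases (t - s) with ⟨he, hge⟩ | ⟨he, hlt⟩
      · have hσ1 : σ = 1 := by rw [hσdef, hLdef, he, div_self (sub_ne_zero.2 hts)]
        have hu2 : u ≤ t - s := by rw [hLdef, he] at hu; exact hu.2
        rw [hσ1, one_mul]
        exact ⟨by linarith [hs.1, hu.1], by linarith [ht.2]⟩
      · have hσ1 : σ = -1 := by
          rw [hσdef, hLdef, he, div_neg, div_self (sub_ne_zero.2 hts)]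
        have hu2 : u ≤ -(t - s) := by rw [hLdef, he] at hu; exact hu.2
        rw [hσ1]
        constructor
        · nlinarith [ht.1, hu.1, hu.2]
        · nlinarith [hs.2, hu.1]
    set γ : ℝ → Eu n := fun u => γ₀ (s + σ * u) with hγdef
    set h : ℝ → Eu m := fun u => (WithLp.toLp 2 (fun i => σ * fderiv ℝ φ (γ u) (X i (γ u))) : Eu m) with hhdef
    have hγW : ∀ u ∈ Icc (0:ℝ) L, γ u ∈ W := fun u hu => hγ₀W _ (hmem u hu)
    have hderiv : ∀ u ∈ Icc (0:ℝ) L, HasDerivAt γ (∑ j, h u j • X j (γ u)) u := by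
      intro u hu
      have hw := hmem u hu
      have h1 : HasDerivAt (fun u : ℝ => s + σ * u) σ u := by
        simpa using ((hasDerivAt_id u).const_mul σ).const_add s
      have h3 := HasDerivAt.scomp u (hγ₀ _ hw) h1
      have e : (∑ j, h u j • X j (γ u)) =
          σ • ∑ i, fderiv ℝ φ (γ u) (X i (γ u)) • X i (γ u) := by
        rw [Finset.smul_sum]
        exact Finset.sum_congr rfl fun j _ => by rw [hhdef]; simp [smul_smul]
      rw [e]
      exact h3
    have hγcont : ContinuousOn γ (Icc 0 L) :=
      fun u hu => ((hderiv u hu).continuousAt).continuousWithinAt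
    have hγWmap : MapsTo γ (Icc (0:ℝ) L) W := fun u hu => hγW u hu
    have hfd : ContinuousOn (fderiv ℝ φ) W := hφ.continuousOn_fderiv_of_isOpen hW le_rfl
    have hD : ∀ j : Fin m, ContinuousOn (fun u => fderiv ℝ φ (γ u) (X j (γ u))) (Icc 0 L) :=
      fun j => ContinuousOn.clm_apply (hfd.comp hγcont hγWmap) ((hXc j).comp hγcont hγWmap)
    have hVcont : ContinuousOn (fun u => ∑ j, h u j • X j (γ u)) (Icc 0 L) := by
      apply continuousOn_finset_sum
      intro j _
      exact ((continuousOn_const.mul (hD j)).smul ((hXc j).comp hγcont hγWmap))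
    have hInt : IntegrableOn (fun u => ∑ j, h u j • X j (γ u)) (Icc 0 L) volume :=
      hVcont.integrableOn_Icc
    have hhcont : ContinuousOn h (Icc 0 L) := by
      have hp : ContinuousOn (fun u => (fun i => σ * fderiv ℝ φ (γ u) (X i (γ u)) : Fin m → ℝ))
          (Icc 0 L) := by
        apply continuousOn_pi.2
        intro i
        exact continuousOn_const.mul (hD i)
      exact (PiLp.continuous_toLp (p := 2) (β := fun _ : Fin m => ℝ)).comp_continuousOn hp
    have hmeash : AEMeasurable h (volume.restrict (Icc (0:ℝ) L)) :=
      hhcont.aemeasurable measurableSet_Icc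
    have hID : ∀ u ∈ Icc (0:ℝ) L, γ u = γ 0 + ∫ w in (0:ℝ)..u, ∑ j, h w j • X j (γ w) := by
      intro u hu
      have hii : IntervalIntegrable (fun w => ∑ j, h w j • X j (γ w)) volume 0 u :=
        (intervalIntegrable_iff_integrableOn_Icc_of_le hu.1).2
          (hInt.mono_set (Icc_subset_Icc le_rfl hu.2))
      have heq := intervalIntegral.integral_eq_sub_of_hasDerivAt
        (f := γ) (f' := fun w => ∑ j, h w j • X j (γ w)) ?_ hii
      · rw [heq]; abel
      · intro w hw
        rw [uIcc_of_le hu.1] at hw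
        exact hderiv w ⟨hw.1, hw.2.trans hu.2⟩
    have hγ0 : γ 0 = γ₀ s := by rw [hγdef]; simp
    have hγL : γ L = γ₀ t := by rw [hγdef]; simp only; rw [hσL]; ring_nf
    have hnorm : ∀ u ∈ Icc (0:ℝ) L, (‖h u‖₊ : ℝ≥0∞) = 1 := by
      intro u hu
      have h1 : ‖h u‖ = 1 := by
        have hsum : ∑ i, ‖h u i‖ ^ 2 = 1 := by
          have hh := hham (γ u) (hγW u hu)
          calc ∑ i, ‖h u i‖ ^ 2
              = ∑ i, σ ^ 2 * (fderiv ℝ φ (γ u) (X i (γ u))) ^ 2 := by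
                refine Finset.sum_congr rfl fun i _ => ?_
                rw [hhdef]
                simp only [PiLp.toLp_apply, Real.norm_eq_abs, sq_abs]
                ring
            _ = σ ^ 2 * ∑ i, (fderiv ℝ φ (γ u) (X i (γ u))) ^ 2 := by rw [Finset.mul_sum]
            _ = 1 := by rw [hh, hσsq, mul_one]
        rw [EuclideanSpace.norm_eq, hsum, Real.sqrt_one]
      rw [← enorm_eq_nnnorm, ← ofReal_norm, h1, ENNReal.ofReal_one]
    refine ⟨γ, h, ⟨hmeash, hInt, hID⟩, hγ0, hγL, hγW, ?_⟩
    rw [setLIntegral_congr_fun_ae measurableSet_Icc (ae_of_all _ hnorm), setLIntegral_one,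
      Real.volume_Icc, sub_zero]

set_option maxHeartbeats 2000000 in
lemma calib_lower (X : Fin m → Eu n → Eu n)
    (W : Set (Eu n)) (hW : IsOpen W)
    (ψ : Eu n → ℝ) (hψ : ContDiffOn ℝ 1 ψ W)
    (hcal : ∀ q' ∈ W, ∀ g : Eu m, fderiv ℝ ψ q' (∑ j, g j • X j q') ≤ ‖g‖)
    {a b : ℝ} {γ : ℝ → Eu n} {h : ℝ → Eu m}
    (hab : a ≤ b) (hctrl : IsControlOf X a b γ h)
    (hmemW : ∀ u ∈ Icc a b, γ u ∈ W) :
    ENNReal.ofReal (ψ (γ b) - ψ (γ a)) ≤ ∫⁻ u in Icc a b, (‖h u‖₊ : ℝ≥0∞) := by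
  rcases eq_or_lt_of_le hab with rfl | hab'
  · simp
  by_cases htop : (∫⁻ u in Icc a b, (‖h u‖₊ : ℝ≥0∞)) = ⊤
  · rw [htop]; exact le_top
  obtain ⟨hmeas, hIntV, hid⟩ := hctrl
  set v : ℝ → Eu n := fun u => ∑ j, h u j • X j (γ u) with hv
  have hInth : IntegrableOn h (Icc a b) volume :=
    ⟨hmeas.aestronglyMeasurable, lt_top_iff_ne_top.2 htop⟩
  have hiiv : ∀ p p', a ≤ p → p ≤ p' → p' ≤ b → IntervalIntegrable v volume p p' :=
    fun p p' hp hpp' hp'b =>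
      (intervalIntegrable_iff_integrableOn_Icc_of_le hpp').2
        (hIntV.mono_set (Icc_subset_Icc hp hp'b))
  have hγcont : ContinuousOn γ (Icc a b) := by
    have h1 : ContinuousOn (fun u => γ a + ∫ w in Ioc a u, v w) (Icc a b) :=
      continuousOn_const.add (intervalIntegral.continuousOn_primitive hIntV)
    refine h1.congr ?_
    intro u hu
    rw [hid u hu, intervalIntegral.integral_of_le hu.1]
  have hK : IsCompact (γ '' Icc a b) := isCompact_Icc.image_of_continuousOn hγcont
  have hKW : γ '' Icc a b ⊆ W := by rintro _ ⟨u, hu, rfl⟩; exact hmemW u hu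
  obtain ⟨ρ, hρ, hρW⟩ := hK.exists_thickening_subset_open hW hKW
  set K₂ := Metric.cthickening (ρ / 2) (γ '' Icc a b) with hK₂def
  have hK₂c : IsCompact K₂ := hK.cthickening
  have hK₂W : K₂ ⊆ W :=
    (Metric.cthickening_subset_thickening' hρ (by linarith) _).trans hρW
  have hfd : ContinuousOn (fderiv ℝ ψ) W := hψ.continuousOn_fderiv_of_isOpen hW le_rfl
  have hIntnv : IntegrableOn (fun u => ‖v u‖) (Icc a b) volume := hIntV.norm
  have hIntnh : IntegrableOn (fun u => ‖h u‖) (Icc a b) volume := hInth.norm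
  have hiinv : ∀ p p', a ≤ p → p ≤ p' → p' ≤ b →
      IntervalIntegrable (fun u => ‖v u‖) volume p p' :=
    fun p p' hp hpp' hp'b =>
      (intervalIntegrable_iff_integrableOn_Icc_of_le hpp').2
        (hIntnv.mono_set (Icc_subset_Icc hp hp'b))
  have hiinh : ∀ p p', a ≤ p → p ≤ p' → p' ≤ b →
      IntervalIntegrable (fun u => ‖h u‖) volume p p' :=
    fun p p' hp hpp' hp'b =>
      (intervalIntegrable_iff_integrableOn_Icc_of_le hpp').2
        (hIntnh.mono_set (Icc_subset_Icc hp hp'b))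
  have hIv0 : 0 ≤ ∫ w in a..b, ‖v w‖ :=
    intervalIntegral.integral_nonneg hab fun w _ => norm_nonneg _
  set C : ℝ := 2 * (∫ w in a..b, ‖v w‖) + 1 with hCdef
  have hCpos : 0 < C := by rw [hCdef]; linarith
  have key : ψ (γ b) - ψ (γ a) ≤ ∫ u in Icc a b, ‖h u‖ := by
    have hIcch : ∫ u in Icc a b, ‖h u‖ = ∫ w in a..b, ‖h w‖ := by
      rw [intervalIntegral.integral_of_le hab, integral_Icc_eq_integral_Ioc]
    rw [hIcch]
    refine le_of_forall_pos_le_add fun ε' hε' => ?_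
    set ε : ℝ := ε' / C with hεdef
    have hε : 0 < ε := div_pos hε' hCpos
    -- uniform continuity data
    obtain ⟨δ₁, hδ₁, H₁⟩ := Metric.uniformContinuousOn_iff.1
      (hK₂c.uniformContinuousOn_of_continuous (hfd.mono hK₂W)) ε hε
    obtain ⟨δ₂, hδ₂, H₂⟩ := Metric.uniformContinuousOn_iff.1
      (isCompact_Icc.uniformContinuousOn_of_continuous hγcont)
      (min δ₁ (ρ / 2)) (lt_min hδ₁ (by linarith))
    obtain ⟨N, hN⟩ := exists_nat_gt ((b - a) / δ₂)
    have hNpos : (0:ℝ) < N := lt_trans (div_pos (by linarith) hδ₂) hN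
    set step : ℝ := (b - a) / N with hstepdef
    have hsteppos : 0 < step := div_pos (by linarith) hNpos
    have hstep : step < δ₂ := by
      rw [hstepdef, div_lt_iff₀ hNpos]
      have := (div_lt_iff₀ hδ₂).1 hN
      linarith
    set u : ℕ → ℝ := fun i => a + i * step with hudef
    have hu0 : u 0 = a := by simp [hudef]
    have huN : u N = b := by
      rw [hudef]
      simp only
      rw [hstepdef]
      rw [mul_comm, div_mul_cancel₀ _ hNpos.ne']; ring
    have humono : ∀ i : ℕ, u i ≤ u (i + 1) := by
      intro i
      rw [hudef]
      simp only
      push_cast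
      nlinarith [hsteppos]
    have hudiff : ∀ i : ℕ, u (i + 1) - u i = step := by
      intro i
      rw [hudef]
      push_cast
      ring
    have humem : ∀ i : ℕ, i ≤ N → u i ∈ Icc a b := by
      intro i hi
      have hiN : (i:ℝ) ≤ N := Nat.cast_le.2 hi
      constructor
      · rw [hudef]; simp only; nlinarith [hsteppos]
      · rw [← huN, hudef]
        simp only
        nlinarith [hsteppos]
    have hiiH : ∀ i < N, IntervalIntegrable (fun w => ‖h w‖) volume (u i) (u (i + 1)) :=
      fun i hi => hiinh (u i) (u (i + 1)) (humem i hi.le).1 (humono i) (humem (i + 1) hi).2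
    have hiiVn : ∀ i < N, IntervalIntegrable (fun w => ‖v w‖) volume (u i) (u (i + 1)) :=
      fun i hi => hiinv (u i) (u (i + 1)) (humem i hi.le).1 (humono i) (humem (i + 1) hi).2
    -- the main per-piece estimate
    have piece : ∀ i < N, ψ (γ (u (i + 1))) - ψ (γ (u i)) ≤
        (∫ w in u i..u (i + 1), ‖h w‖) + ε * 2 * ∫ w in u i..u (i + 1), ‖v w‖ := by
      intro i hi
      set p : ℝ := u i with hpdef
      set p' : ℝ := u (i + 1) with hp'def
      have hpmem : p ∈ Icc a b := humem i hi.le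
      have hp'mem : p' ∈ Icc a b := humem (i + 1) hi
      have hpp' : p ≤ p' := humono i
      set x : Eu n := γ p with hxdef
      have hxK : x ∈ γ '' Icc a b := ⟨p, hpmem, rfl⟩
      set r : ℝ := min δ₁ (ρ / 2) with hrdef
      have hrpos : 0 < r := lt_min hδ₁ (by linarith)
      have hγclose : ∀ w ∈ Icc p p', dist (γ w) x < r := by
        intro w hw
        have hwmem : w ∈ Icc a b := ⟨hpmem.1.trans hw.1, hw.2.trans hp'mem.2⟩
        refine H₂ w hwmem p hpmem ?_
        rw [Real.dist_eq, abs_of_nonneg (by linarith [hw.1])]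
        have := hudiff i
        have hw2 := hw.2
        rw [← hp'def, ← hpdef] at *
        linarith [hw.2, hstep]
      have hSK₂ : Metric.ball x r ⊆ K₂ := by
        intro y hy
        refine Metric.mem_cthickening_of_dist_le y x (ρ / 2) _ hxK ?_
        have : dist y x < r := Metric.mem_ball.1 hy
        have : r ≤ ρ / 2 := min_le_right _ _
        linarith [Metric.mem_ball.1 hy]
      have hSW : Metric.ball x r ⊆ W := hSK₂.trans hK₂W
      have hxK₂ : x ∈ K₂ := Metric.self_subset_cthickening _ hxK
      have hfe : ∀ y ∈ Metric.ball x r, ‖fderiv ℝ ψ y - fderiv ℝ ψ x‖ ≤ ε := by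
        intro y hy
        have hd := H₁ y (hSK₂ hy) x hxK₂
          (lt_of_lt_of_le (Metric.mem_ball.1 hy) (min_le_left _ _))
        rw [dist_eq_norm] at hd
        exact hd.le
      set Δ : Eu n := γ p' - x with hΔdef
      have hΔr : ‖Δ‖ < r := by
        have := hγclose p' ⟨hpp', le_rfl⟩
        rwa [dist_eq_norm] at this
      have hΔball : ∀ θ ∈ Icc (0:ℝ) 1, x + θ • Δ ∈ Metric.ball x r := by
        intro θ hθ
        rw [Metric.mem_ball, dist_eq_norm]
        have e : ‖x + θ • Δ - x‖ = θ * ‖Δ‖ := by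
          rw [add_sub_cancel_left, norm_smul, Real.norm_eq_abs, abs_of_nonneg hθ.1]
        rw [e]
        nlinarith [norm_nonneg Δ, hθ.2, hΔr, hrpos, hθ.1]
      have hlinecont : ContinuousOn (fun θ : ℝ => (fderiv ℝ ψ (x + θ • Δ)) Δ) (Icc (0:ℝ) 1) := by
        refine ContinuousOn.clm_apply ?_ continuousOn_const
        exact hfd.comp
          ((continuous_const.add (continuous_id.smul continuous_const)).continuousOn)
          (fun θ hθ => hSW (hΔball θ hθ))
      have hchordII : IntervalIntegrable (fun θ : ℝ => (fderiv ℝ ψ (x + θ • Δ)) Δ)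
          volume 0 1 := by
        apply ContinuousOn.intervalIntegrable
        rwa [uIcc_of_le zero_le_one]
      have hchord : ψ (γ p') - ψ x = ∫ θ in (0:ℝ)..1, (fderiv ℝ ψ (x + θ • Δ)) Δ := by
        have hder : ∀ θ ∈ uIcc (0:ℝ) 1,
            HasDerivAt (fun θ : ℝ => ψ (x + θ • Δ)) ((fderiv ℝ ψ (x + θ • Δ)) Δ) θ := by
          intro θ hθ
          rw [uIcc_of_le zero_le_one] at hθ
          have hyW : x + θ • Δ ∈ W := hSW (hΔball θ hθ)
          have hdiff : DifferentiableAt ℝ ψ (x + θ • Δ) :=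
            (hψ.differentiableOn one_ne_zero).differentiableAt (hW.mem_nhds hyW)
          have hline : HasDerivAt (fun θ : ℝ => x + θ • Δ) Δ θ := by
            simpa using ((hasDerivAt_id θ).smul_const Δ).const_add x
          exact hdiff.hasFDerivAt.comp_hasDerivAt θ hline
        have := intervalIntegral.integral_eq_sub_of_hasDerivAt hder hchordII
        rw [this]
        simp [hΔdef]
      have hbound1 : (∫ θ in (0:ℝ)..1, (fderiv ℝ ψ (x + θ • Δ)) Δ) ≤
          (fderiv ℝ ψ x) Δ + ε * ‖Δ‖ := by
        have hle : ∀ θ ∈ Icc (0:ℝ) 1,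
            (fderiv ℝ ψ (x + θ • Δ)) Δ ≤ (fderiv ℝ ψ x) Δ + ε * ‖Δ‖ := by
          intro θ hθ
          have e : (fderiv ℝ ψ (x + θ • Δ)) Δ =
              (fderiv ℝ ψ x) Δ + (fderiv ℝ ψ (x + θ • Δ) - fderiv ℝ ψ x) Δ := by simp
          rw [e]
          have hb : (fderiv ℝ ψ (x + θ • Δ) - fderiv ℝ ψ x) Δ ≤ ε * ‖Δ‖ := by
            calc (fderiv ℝ ψ (x + θ • Δ) - fderiv ℝ ψ x) Δ
                ≤ ‖(fderiv ℝ ψ (x + θ • Δ) - fderiv ℝ ψ x) Δ‖ := le_abs_self _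
              _ ≤ ‖fderiv ℝ ψ (x + θ • Δ) - fderiv ℝ ψ x‖ * ‖Δ‖ :=
                  ContinuousLinearMap.le_opNorm _ _
              _ ≤ ε * ‖Δ‖ :=
                  mul_le_mul_of_nonneg_right (hfe _ (hΔball θ hθ)) (norm_nonneg _)
          linarith
        calc (∫ θ in (0:ℝ)..1, (fderiv ℝ ψ (x + θ • Δ)) Δ)
            ≤ ∫ _ in (0:ℝ)..1, ((fderiv ℝ ψ x) Δ + ε * ‖Δ‖) :=
              intervalIntegral.integral_mono_on zero_le_one hchordII
                intervalIntegrable_const hle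
          _ = (fderiv ℝ ψ x) Δ + ε * ‖Δ‖ := by simp
      have hintΔ : Δ = ∫ w in p..p', v w := by
        have h1 := hid p hpmem
        have h2 := hid p' hp'mem
        have hadd := intervalIntegral.integral_add_adjacent_intervals
          (hiiv a p le_rfl hpmem.1 hpmem.2) (hiiv p p' hpmem.1 hpp' hp'mem.2)
        rw [hΔdef, hxdef, h2, h1, ← hadd]
        abel
      have hΔnorm : ‖Δ‖ ≤ ∫ w in p..p', ‖v w‖ := by
        rw [hintΔ]
        exact intervalIntegral.norm_integral_le_integral_norm hpp'
      have hIIvp : IntervalIntegrable v volume p p' := hiiv p p' hpmem.1 hpp' hp'mem.2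
      have hlin1 : (fderiv ℝ ψ x) Δ = ∫ w in p..p', (fderiv ℝ ψ x) (v w) := by
        rw [hintΔ]
        exact ((fderiv ℝ ψ x).intervalIntegral_comp_comm hIIvp).symm
      have hIIh : IntervalIntegrable (fun w => ‖h w‖) volume p p' :=
        hiinh p p' hpmem.1 hpp' hp'mem.2
      have hIIvn : IntervalIntegrable (fun w => ‖v w‖) volume p p' :=
        hiinv p p' hpmem.1 hpp' hp'mem.2
      have hbound2 : (∫ w in p..p', (fderiv ℝ ψ x) (v w)) ≤
          (∫ w in p..p', ‖h w‖) + ε * ∫ w in p..p', ‖v w‖ := by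
        have hIIL : IntervalIntegrable (fun w => (fderiv ℝ ψ x) (v w)) volume p p' :=
          intervalIntegrable_iff.2 ((fderiv ℝ ψ x).integrable_comp (intervalIntegrable_iff.1 hIIvp))
        have hIIR : IntervalIntegrable (fun w => ‖h w‖ + ε * ‖v w‖) volume p p' :=
          hIIh.add (hIIvn.const_mul ε)
        have hmono := intervalIntegral.integral_mono_on hpp' hIIL hIIR ?_
        · rw [intervalIntegral.integral_add hIIh (hIIvn.const_mul ε),
            intervalIntegral.integral_const_mul] at hmono
          exact hmono
        · intro w hw
          have hwab : w ∈ Icc a b := ⟨hpmem.1.trans hw.1, hw.2.trans hp'mem.2⟩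
          have hγwW : γ w ∈ W := hmemW w hwab
          have hγwS : γ w ∈ Metric.ball x r := Metric.mem_ball.2 (hγclose w hw)
          have hcalw : (fderiv ℝ ψ (γ w)) (v w) ≤ ‖h w‖ := hcal (γ w) hγwW (h w)
          have hdiffb : ‖fderiv ℝ ψ x - fderiv ℝ ψ (γ w)‖ ≤ ε := by
            rw [norm_sub_rev]
            exact hfe _ hγwS
          have e : (fderiv ℝ ψ x) (v w) =
              (fderiv ℝ ψ (γ w)) (v w) + (fderiv ℝ ψ x - fderiv ℝ ψ (γ w)) (v w) := by simp
          rw [e]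
          have hb : (fderiv ℝ ψ x - fderiv ℝ ψ (γ w)) (v w) ≤ ε * ‖v w‖ := by
            calc (fderiv ℝ ψ x - fderiv ℝ ψ (γ w)) (v w)
                ≤ ‖(fderiv ℝ ψ x - fderiv ℝ ψ (γ w)) (v w)‖ := le_abs_self _
              _ ≤ ‖fderiv ℝ ψ x - fderiv ℝ ψ (γ w)‖ * ‖v w‖ :=
                  ContinuousLinearMap.le_opNorm _ _
              _ ≤ ε * ‖v w‖ := mul_le_mul_of_nonneg_right hdiffb (norm_nonneg _)
          linarith
      have hxγp : ψ x = ψ (γ p) := rfl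
      have hεΔ : ε * ‖Δ‖ ≤ ε * ∫ w in p..p', ‖v w‖ :=
        mul_le_mul_of_nonneg_left hΔnorm hε.le
      have := hchord
      rw [hxγp] at this
      rw [this]
      calc (∫ θ in (0:ℝ)..1, (fderiv ℝ ψ (x + θ • Δ)) Δ)
          ≤ (fderiv ℝ ψ x) Δ + ε * ‖Δ‖ := hbound1
        _ = (∫ w in p..p', (fderiv ℝ ψ x) (v w)) + ε * ‖Δ‖ := by rw [hlin1]
        _ ≤ ((∫ w in p..p', ‖h w‖) + ε * ∫ w in p..p', ‖v w‖) +
            ε * ∫ w in p..p', ‖v w‖ := add_le_add hbound2 hεΔ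
        _ = (∫ w in p..p', ‖h w‖) + ε * 2 * ∫ w in p..p', ‖v w‖ := by ring
    -- sum the pieces
    have htel : ψ (γ b) - ψ (γ a) =
        ∑ i ∈ Finset.range N, (ψ (γ (u (i + 1))) - ψ (γ (u i))) := by
      rw [Finset.sum_range_sub (fun i => ψ (γ (u i))) N, hu0, huN]
    have hNnat : 0 < N := by exact_mod_cast hNpos
    have hsum_h := intervalIntegral.sum_integral_adjacent_intervals hiiH
    have hsum_v := intervalIntegral.sum_integral_adjacent_intervals hiiVn
    rw [hu0, huN] at hsum_h hsum_v
    have htotal : ψ (γ b) - ψ (γ a) ≤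
        (∫ w in a..b, ‖h w‖) + ε * 2 * ∫ w in a..b, ‖v w‖ := by
      rw [htel]
      calc ∑ i ∈ Finset.range N, (ψ (γ (u (i + 1))) - ψ (γ (u i)))
          ≤ ∑ i ∈ Finset.range N, ((∫ w in u i..u (i + 1), ‖h w‖) +
              ε * 2 * ∫ w in u i..u (i + 1), ‖v w‖) :=
            Finset.sum_le_sum fun i hi => piece i (Finset.mem_range.1 hi)
        _ = (∑ i ∈ Finset.range N, ∫ w in u i..u (i + 1), ‖h w‖) +
            ε * 2 * ∑ i ∈ Finset.range N, ∫ w in u i..u (i + 1), ‖v w‖ := by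
            rw [Finset.sum_add_distrib, Finset.mul_sum]
        _ = (∫ w in a..b, ‖h w‖) + ε * 2 * ∫ w in a..b, ‖v w‖ := by
            rw [hsum_h, hsum_v]
    have hεC : ε * 2 * (∫ w in a..b, ‖v w‖) ≤ ε * C := by
      rw [hCdef]
      nlinarith [hε.le, hIv0]
    have hεC' : ε * C = ε' := by
      rw [hεdef]
      field_simp
    linarith [htotal, hεC, hεC'.le]
  calc ENNReal.ofReal (ψ (γ b) - ψ (γ a))
      ≤ ENNReal.ofReal (∫ u in Icc a b, ‖h u‖) := ENNReal.ofReal_le_ofReal key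
    _ = ∫⁻ u in Icc a b, (‖h u‖₊ : ℝ≥0∞) := ofReal_integral_norm_eq_lintegral_enorm hInth

end AuxLemmas

/-- **Calibrated integral curves realize the CC distance**: if `φ` is a
calibration on the open set `W ⊆ U` (i.e. `⟨dφ, Σⱼ hⱼ Xⱼ⟩ ≤ |h|` and
`Σᵢ ⟨dφ, Xᵢ⟩² = 1` on `W`), `q ∈ W`, `r̄ > 0` with `B(q, 2r̄) ⊆ W`, and
`γ₀ : (-r̄/2, r̄/2) → W` is an integral curve of
`Y = Σᵢ ⟨dφ, Xᵢ⟩ Xᵢ` with `γ₀(0) = q`, then `d(γ₀(s), γ₀(t)) = |t - s|`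
for all `s, t ∈ (-r̄/2, r̄/2)`. -/
theorem calibrated_integral_curve_realizes_ccDist
    (n m : ℕ) (hm : 1 ≤ m) (hmn : m ≤ n)
    (U : Set (Eu n)) (hU : IsOpen U)
    (X : Fin m → Eu n → Eu n)
    (hX : ∀ j, IsC11On (X j) U)
    (hindep : ∀ q ∈ U, LinearIndependent ℝ (fun j => X j q))
    (W : Set (Eu n)) (hW : IsOpen W) (hWU : W ⊆ U)
    (φ : Eu n → ℝ) (hφ : ContDiffOn ℝ 1 φ W)
    (hcal : ∀ q' ∈ W, ∀ h : Eu m, fderiv ℝ φ q' (∑ j, h j • X j q') ≤ ‖h‖)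
    (hham : ∀ q' ∈ W, ∑ i, (fderiv ℝ φ q' (X i q')) ^ 2 = 1)
    (q : Eu n) (hq : q ∈ W)
    (rbar : ℝ) (hrbar : 0 < rbar)
    (hball : ccBall X U q (2 * rbar) ⊆ W)
    (γ₀ : ℝ → Eu n)
    (hγ₀W : ∀ t ∈ Ioo (-(rbar / 2)) (rbar / 2), γ₀ t ∈ W)
    (hγ₀ : ∀ t ∈ Ioo (-(rbar / 2)) (rbar / 2),
      HasDerivAt γ₀ (∑ i, fderiv ℝ φ (γ₀ t) (X i (γ₀ t)) • X i (γ₀ t)) t)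
    (hγ₀0 : γ₀ 0 = q) :
    ∀ s ∈ Ioo (-(rbar / 2)) (rbar / 2), ∀ t ∈ Ioo (-(rbar / 2)) (rbar / 2),
      ccDist X U (γ₀ s) (γ₀ t) = ENNReal.ofReal |t - s| := by
  intro s hs t ht
  have hXc : ∀ j, ContinuousOn (X j) W := fun j => ((hX j).1.continuousOn).mono hWU
  obtain ⟨γp, hp, hpA, hpB, hpC, hpW', hpE⟩ :=
    exists_cal_path X W hW hXc φ hφ hham rbar γ₀ hγ₀W hγ₀ s t hs ht
  have hupper : ccDist X U (γ₀ s) (γ₀ t) ≤ ENNReal.ofReal |t - s| := by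
    calc ccDist X U (γ₀ s) (γ₀ t) = ccDist X U (γp 0) (γp |t - s|) := by rw [hpB, hpC]
      _ ≤ ∫⁻ u in Icc (0:ℝ) |t - s|, (‖hp u‖₊ : ℝ≥0∞) :=
          ccDist_le_lintegral X U (abs_nonneg _) (fun w hw => hWU (hpW' w hw)) hpA
      _ = ENNReal.ofReal |t - s| := hpE
  refine le_antisymm hupper ?_
  unfold ccDist
  refine le_iInf fun a => le_iInf fun b => le_iInf fun γ => le_iInf fun hab =>
    le_iInf fun hmemU => le_iInf fun ha => le_iInf fun hb => le_iInf fun _ => ?_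
  unfold ccLength
  refine le_iInf fun h => le_iInf fun hctrl => ?_
  set Λ := ∫⁻ u in Icc a b, (‖h u‖₊ : ℝ≥0∞) with hΛ
  by_contra hcon
  push_neg at hcon
  have habs_s : |s| < rbar / 2 := abs_lt.2 ⟨by linarith [hs.1], hs.2⟩
  have habs_t : |t| < rbar / 2 := abs_lt.2 ⟨by linarith [ht.1], ht.2⟩
  have habs_ts : |t - s| ≤ |t| + |s| := abs_sub t s
  have h0mem : (0:ℝ) ∈ Ioo (-(rbar / 2)) (rbar / 2) := ⟨by linarith, by linarith⟩
  obtain ⟨δc, gc, hgA, hgB, hgC, hgW, hgE⟩ :=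
    exists_cal_path X W hW hXc φ hφ hham rbar γ₀ hγ₀W hγ₀ 0 s h0mem hs
  have hWmem : ∀ u ∈ Icc a b, γ u ∈ W := by
    intro u hu
    have hrestr := hctrl.restrict hu
    have hcc := ccDist_le_concat X U (abs_nonneg (s - 0)) hu.1
      (fun w hw => hWU (hgW w hw))
      (fun w hw => hmemU w ⟨hw.1, hw.2.trans hu.2⟩)
      hgA hrestr (by rw [hgC, ha])
    have e0 : δc 0 = q := by rw [hgB, hγ₀0]
    have hlt : ccDist X U q (γ u) < ENNReal.ofReal (2 * rbar) := by
      calc ccDist X U q (γ u)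
          ≤ ENNReal.ofReal |s - 0| + ∫⁻ w in Icc a u, (‖h w‖₊ : ℝ≥0∞) := by
            rw [← e0, ← hgE]; exact hcc
        _ ≤ ENNReal.ofReal |s| + Λ := by
            rw [sub_zero]
            exact add_le_add le_rfl (lintegral_mono_set (Icc_subset_Icc le_rfl hu.2))
        _ < ENNReal.ofReal |s| + ENNReal.ofReal |t - s| :=
            ENNReal.add_lt_add_left ENNReal.ofReal_ne_top hcon
        _ = ENNReal.ofReal (|s| + |t - s|) :=
            (ENNReal.ofReal_add (abs_nonneg _) (abs_nonneg _)).symm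
        _ ≤ ENNReal.ofReal (2 * rbar) := ENNReal.ofReal_le_ofReal (by linarith)
    exact hball ⟨hmemU u hu, hlt⟩
  have hphi : φ (γ₀ t) - φ (γ₀ s) = t - s := by
    have hone : ∀ x ∈ uIcc s t, HasDerivAt (fun w => φ (γ₀ w)) 1 x := by
      intro x hx
      have hx' : s ⊓ t ≤ x ∧ x ≤ s ⊔ t := by
        rw [Set.uIcc, Set.mem_Icc] at hx
        exact hx
      have hxI : x ∈ Ioo (-(rbar / 2)) (rbar / 2) :=
        ⟨lt_of_lt_of_le (lt_inf_iff.2 ⟨hs.1, ht.1⟩) hx'.1,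
         lt_of_le_of_lt hx'.2 (sup_lt_iff.2 ⟨hs.2, ht.2⟩)⟩
      have hWx := hγ₀W x hxI
      have hdiff : DifferentiableAt ℝ φ (γ₀ x) :=
        (hφ.differentiableOn one_ne_zero).differentiableAt (hW.mem_nhds hWx)
      have hcd := hdiff.hasFDerivAt.comp_hasDerivAt x (hγ₀ x hxI)
      have e : (fderiv ℝ φ (γ₀ x)) (∑ i, fderiv ℝ φ (γ₀ x) (X i (γ₀ x)) • X i (γ₀ x)) = 1 := by
        rw [map_sum]
        simp only [ContinuousLinearMap.map_smul, smul_eq_mul]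
        rw [← hham (γ₀ x) hWx]
        exact Finset.sum_congr rfl fun i _ => (sq (fderiv ℝ φ (γ₀ x) (X i (γ₀ x)))).symm
      rw [e] at hcd
      exact hcd
    have hFTC := intervalIntegral.integral_eq_sub_of_hasDerivAt hone intervalIntegrable_const
    simp only [intervalIntegral.integral_const, smul_eq_mul, mul_one] at hFTC
    linarith [hFTC]
  have hcal' : ∀ q' ∈ W, ∀ g : Eu m,
      fderiv ℝ (fun x => -φ x) q' (∑ j, g j • X j q') ≤ ‖g‖ := by
    intro q' hq' g
    have h3 := hcal q' hq' (-g)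
    have e1 : (∑ j, (-g : Eu m) j • X j q') = -(∑ j, g j • X j q') := by
      rw [← Finset.sum_neg_distrib]
      refine Finset.sum_congr rfl fun j _ => ?_
      have : (-g : Eu m) j = -(g j) := rfl
      rw [this, neg_smul]
    rw [e1, norm_neg, map_neg] at h3
    rw [show (fun x => -φ x) = -φ from rfl, fderiv_neg]
    simpa using h3
  have hfwd := calib_lower X W hW φ hφ hcal hab hctrl hWmem
  have hbwd := calib_lower X W hW (fun x => -φ x) hφ.neg hcal' hab hctrl hWmem
  have hfinal : ENNReal.ofReal |t - s| ≤ Λ := by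
    rcases abs_cases (t - s) with ⟨he, _⟩ | ⟨he, _⟩
    · rw [he, ← hphi, ← ha, ← hb]
      exact hfwd
    · rw [he]
      have e2 : -(t - s) = (fun x => -φ x) (γ b) - (fun x => -φ x) (γ a) := by
        simp only
        rw [ha, hb]
        linarith [hphi]
      rw [e2]
      exact hbwd
  exact absurd hfinal (not_le.2 hcon)


end
end

section
/- (The calibration 1-form is exact.) Let I ⊆ ℝ be an open interval containing 0 and U' ⊆ ℝ^{n−1} open. Suppose Q : I × U' → ℝⁿ and Λ : I × U' → (ℝⁿ)* are C¹ maps such that the mixed second partial derivatives ∂ₜ∂_{x'ⱼ}Q and ∂_{x'ⱼ}∂ₜQ exist and coincide (e.g. Q of class C^{1,1}), and assume: for each fixed x' ∈ U' the curve t ↦ (Q(t,x'), Λ(t,x')) is a normal extremal; Σᵢ ⟨Λ(t,x'), Xᵢ(Q(t,x'))⟩² = 1 for all (t,x') ∈ I × U'; and ⟨Λ(0,x'), ∂Q/∂x'ⱼ(0,x')⟩ = 0 for every j = 1, …, n−1 and every x' ∈ U'. Then for all (t,x') ∈ I × U': ⟨Λ(t,x'), ∂Q/∂x'ⱼ(t,x')⟩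 = 0 for every j, and ⟨Λ(t,x'), ∂Q/∂t(t,x')⟩ = 1. In particular, if Q is a diffeomorphism of I × U' onto an open set W ⊆ ℝⁿ, then the 1-form x ↦ Λ(Q⁻¹(x)) on W is exact, with primitive the t-component of Q⁻¹. -/
set_option maxHeartbeats 1000000

open MeasureTheory Set
open scoped ENNReal

noncomputable section

/-- `f` is of class `C^{1,1}`: continuously differentiable with locally
Lipschitz derivative. -/
def IsC11 {n : ℕ} (f : Eu n → Eu n) : Prop :=
  ContDiff ℝ 1 f ∧
  ∀ q, ∃ (K : NNReal) (V : Set (Eu n)), V ∈ nhds q ∧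
    LipschitzOnWith K (fderiv ℝ f) V

/-- The sub-Riemannian Hamiltonian `H(q,λ) = (1/2) Σᵢ ⟨λ, Xᵢ(q)⟩²`. -/
def srHamiltonian {n m : ℕ} (X : Fin m → Eu n → Eu n) (q : Eu n)
    (l : Eu n →L[ℝ] ℝ) : ℝ :=
  (1 / 2) * ∑ i, (l (X i q)) ^ 2

/-- `(q, λ)` is a normal extremal on `[a,b]`: a `C¹` solution of Hamilton's
equations `q̇ = ∂H/∂λ(q,λ)`, `λ̇ = -∂H/∂q(q,λ)` for the sub-Riemannian
Hamiltonian. -/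
def IsNormalExtremal {n m : ℕ} (X : Fin m → Eu n → Eu n) (a b : ℝ)
    (q : ℝ → Eu n) (lam : ℝ → (Eu n →L[ℝ] ℝ)) : Prop :=
  ∀ t ∈ Icc a b,
    HasDerivWithinAt q (∑ i, lam t (X i (q t)) • X i (q t)) (Icc a b) t ∧
    HasDerivWithinAt lam
      (-(∑ i, lam t (X i (q t)) • ((lam t).comp (fderiv ℝ (X i) (q t)))))
      (Icc a b) t

section AuxLemmas

open Asymptotics
open scoped RealInnerProductSpace

lemma curve_trap {E : Type*} [NormedAddCommGroup E] [NormedSpace ℝ E]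
    {γ γ' : ℝ → E} {z : E} {r C a b : ℝ}
    (hab : a ≤ b) (hr : 0 < r) (hC : 0 ≤ C)
    (hd : ∀ τ ∈ Icc a b, HasDerivWithinAt γ (γ' τ) (Icc a b) τ)
    (hb : ∀ τ ∈ Icc a b, ‖γ τ - z‖ ≤ r → ‖γ' τ‖ ≤ C)
    (h0 : ‖γ a - z‖ < r / 2) (hlen : C * (b - a) ≤ r / 2) :
    ∀ s ∈ Icc a b, ‖γ s - γ a‖ ≤ C * (s - a) := by
  have hcont : ContinuousOn γ (Icc a b) := fun τ hτ => (hd τ hτ).continuousWithinAt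
  have hnorm : ContinuousOn (fun s => ‖γ s - z‖) (Icc a b) :=
    (hcont.sub continuousOn_const).norm
  have key : ∀ s ∈ Icc a b, ‖γ s - z‖ ≤ r := by
    by_contra hcon
    push_neg at hcon
    obtain ⟨s₀, hs₀, hs₀r⟩ := hcon
    set A : Set ℝ := Icc a b ∩ (fun s => ‖γ s - z‖) ⁻¹' (Ici r) with hA
    have hAclosed : IsClosed A :=
      hnorm.preimage_isClosed_of_isClosed isClosed_Icc isClosed_Ici
    have hAne : A.Nonempty := ⟨s₀, hs₀, le_of_lt hs₀r⟩
    have hAbdd : BddBelow A := ⟨a, fun τ hτ => hτ.1.1⟩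
    set T := sInf A with hT
    have hTA : T ∈ A := hAclosed.csInf_mem hAne hAbdd
    have hTicc : T ∈ Icc a b := hTA.1
    have haT : a < T := by
      rcases lt_or_eq_of_le hTicc.1 with h | h
      · exact h
      · exfalso
        have : r ≤ ‖γ a - z‖ := by rw [h]; exact hTA.2
        linarith
    have hin' : ∀ σ ∈ Ico a T, ‖γ σ - z‖ ≤ r := by
      intro σ hσ
      by_contra hgt
      push_neg at hgt
      have : T ≤ σ := csInf_le hAbdd ⟨⟨hσ.1, le_trans (le_of_lt hσ.2) hTicc.2⟩, le_of_lt hgt⟩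
      exact absurd hσ.2 (not_lt.2 this)
    have hd' : ∀ τ ∈ Icc a T, HasDerivWithinAt γ (γ' τ) (Icc a T) τ := fun τ hτ =>
      (hd τ ⟨hτ.1, le_trans hτ.2 hTicc.2⟩).mono (Icc_subset_Icc le_rfl hTicc.2)
    have hbd' : ∀ τ ∈ Ico a T, ‖γ' τ‖ ≤ C := fun τ hτ =>
      hb τ ⟨hτ.1, le_trans (le_of_lt hτ.2) hTicc.2⟩ (hin' τ hτ)
    have hmvt : ‖γ T - γ a‖ ≤ C * (T - a) :=
      norm_image_sub_le_of_norm_deriv_le_segment' hd' hbd' T ⟨le_of_lt haT, le_rfl⟩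
    have hlt : ‖γ T - z‖ < r := by
      have h1 : ‖γ T - z‖ ≤ ‖γ T - γ a‖ + ‖γ a - z‖ := by
        have := norm_add_le (γ T - γ a) (γ a - z)
        simpa using this
      have h2 : C * (T - a) ≤ C * (b - a) := by
        apply mul_le_mul_of_nonneg_left _ hC
        linarith [hTicc.2]
      linarith
    exact absurd hTA.2 (not_le.2 hlt)
  have hbd : ∀ τ ∈ Ico a b, ‖γ' τ‖ ≤ C := fun τ hτ =>
    hb τ ⟨hτ.1, le_of_lt hτ.2⟩ (key τ ⟨hτ.1, le_of_lt hτ.2⟩)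
  exact fun s hs => norm_image_sub_le_of_norm_deriv_le_segment' hd hbd s hs

lemma deriv_inj {n : ℕ} {I : Set ℝ} (hIopen : IsOpen I) {U' : Set (Eu n)}
    {Q : ℝ → Eu n → Eu (n + 1)} {Qt : ℝ → Eu n → Eu (n + 1)}
    {Qx : ℝ → Eu n → (Eu n →L[ℝ] Eu (n + 1))}
    (hQt : ∀ t ∈ I, ∀ x' ∈ U', HasDerivAt (fun s => Q s x') (Qt t x') t)
    (hQx : ∀ t ∈ I, ∀ x' ∈ U', HasFDerivAt (fun y => Q t y) (Qx t x') x')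
    {W : Set (Eu (n + 1))} (hW : IsOpen W) {Qinv : Eu (n + 1) → ℝ × Eu n}
    (hQinv : ∀ x ∈ W, (Qinv x).1 ∈ I ∧ (Qinv x).2 ∈ U' ∧
      Q (Qinv x).1 (Qinv x).2 = x ∧ DifferentiableAt ℝ Qinv x)
    {z : Eu (n + 1)} (hz : z ∈ W) {C : ℝ} (hC : 0 ≤ C)
    (hspeed : ∀ τ ∈ I, ∀ y ∈ U', ‖Q τ y - z‖ ≤ 1 → ‖Qt τ y‖ ≤ C) :
    ∀ v : Eu (n + 1), fderiv ℝ Qinv z v = 0 → v = 0 := by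
  intro v hv
  obtain ⟨ht0, hy0, hQz, hdz⟩ := hQinv z hz
  set t0 := (Qinv z).1 with ht0def
  set y0 := (Qinv z).2 with hy0def
  set κ : ℝ → Eu (n + 1) := fun ε => z + ε • v with hκdef
  have hκ0 : κ 0 = z := by simp [hκdef]
  have hκd : HasDerivAt κ v 0 := by
    rw [hκdef]; simpa using ((hasDerivAt_id (0 : ℝ)).smul_const v).const_add z
  have hκcont : Continuous κ := by continuity
  have hκtend : Filter.Tendsto κ (nhds 0) (nhds z) := by
    have := hκcont.tendsto 0
    rwa [hκ0] at this
  have hWev : ∀ᶠ ε in nhds (0 : ℝ), κ ε ∈ W := hκtend.eventually (hW.eventually_mem hz)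
  set σ : ℝ → ℝ := fun ε => (Qinv (κ ε)).1 with hσdef
  set u : ℝ → Eu n := fun ε => (Qinv (κ ε)).2 with hudef
  have hσ0 : σ 0 = t0 := by simp [hσdef, hκ0, ht0def]
  have hu0 : u 0 = y0 := by simp [hudef, hκ0, hy0def]
  have hp : HasDerivAt (fun ε => Qinv (κ ε)) 0 0 := by
    have h : HasFDerivAt Qinv (fderiv ℝ Qinv z) (κ 0) := by
      rw [hκ0]; exact hdz.hasFDerivAt
    have h2 := h.comp_hasDerivAt 0 hκd
    rw [hv] at h2
    simpa [Function.comp_def] using h2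
  have hσd : HasDerivAt σ 0 0 := by
    have h2 := (ContinuousLinearMap.fst ℝ ℝ (Eu n)).hasFDerivAt.comp_hasDerivAt 0 hp
    simpa [Function.comp_def] using h2
  have hud : HasDerivAt u 0 0 := by
    have h2 := (ContinuousLinearMap.snd ℝ ℝ (Eu n)).hasFDerivAt.comp_hasDerivAt 0 hp
    simpa [Function.comp_def] using h2
  have hG : HasDerivAt (fun ε => Q t0 (u ε)) 0 0 := by
    have h : HasFDerivAt (fun y => Q t0 y) (Qx t0 y0) (u 0) := by
      rw [hu0]; exact hQx t0 ht0 y0 hy0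
    have h2 := h.comp_hasDerivAt 0 hud
    simpa [Function.comp_def] using h2
  obtain ⟨δI, hδI, hballI⟩ := Metric.isOpen_iff.1 hIopen t0 ht0
  have hσc : Filter.Tendsto σ (nhds 0) (nhds t0) := by
    have := hσd.continuousAt.tendsto; rwa [hσ0] at this
  have hAbound : ∀ᶠ ε in nhds (0 : ℝ),
      ‖Q (σ ε) (u ε) - Q t0 (u ε)‖ ≤ C * |σ ε - t0| := by
    have hev1 : ∀ᶠ ε in nhds (0 : ℝ), |σ ε - t0| < δI := by
      have h := hσc (Metric.ball_mem_nhds t0 hδI)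
      filter_upwards [h] with ε hε
      simpa [Real.dist_eq] using hε
    have hpos : (0:ℝ) < 1 / (2 * C + 2) := by positivity
    have hev2 : ∀ᶠ ε in nhds (0 : ℝ), |σ ε - t0| ≤ 1 / (2 * C + 2) := by
      have h := hσc (Metric.ball_mem_nhds t0 hpos)
      filter_upwards [h] with ε hε
      exact le_of_lt (by simpa [Real.dist_eq] using hε)
    have hGC : Filter.Tendsto (fun ε => Q t0 (u ε)) (nhds 0) (nhds z) := by
      have h2 := hG.continuousAt.tendsto
      simp only [hu0] at h2
      rwa [hQz] at h2
    have hev3 : ∀ᶠ ε in nhds (0 : ℝ), ‖Q t0 (u ε) - z‖ < 1 / 2 := by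
      have h := hGC (Metric.ball_mem_nhds z (by norm_num : (0:ℝ) < 1/2))
      filter_upwards [h] with ε hε
      simpa [dist_eq_norm] using hε
    have hev4 : ∀ᶠ ε in nhds (0 : ℝ), ‖κ ε - z‖ < 1 / 2 := by
      have h := hκtend (Metric.ball_mem_nhds z (by norm_num : (0:ℝ) < 1/2))
      filter_upwards [h] with ε hε
      simpa [dist_eq_norm] using hε
    have hlenC : ∀ d : ℝ, d ≤ 1 / (2 * C + 2) → C * d ≤ 1 / 2 := by
      intro d hd
      have h1 : C * d ≤ C * (1 / (2 * C + 2)) :=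
        mul_le_mul_of_nonneg_left hd hC
      have h2 : C * (1 / (2 * C + 2)) ≤ 1 / 2 := by
        rw [mul_one_div, div_le_div_iff₀ (by linarith) (by norm_num)]
        linarith
      linarith
    filter_upwards [hev1, hev2, hev3, hev4, hWev] with ε h1 h2 h3 h4 hWε
    obtain ⟨hσI, huU, hQκ, -⟩ := hQinv (κ ε) hWε
    rcases le_total t0 (σ ε) with hc | hc
    · -- t0 ≤ σ ε
      have habs : |σ ε - t0| = σ ε - t0 := abs_of_nonneg (by linarith)
      have h1' : σ ε - t0 < δI := by rwa [habs] at h1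
      have hIcc : ∀ τ ∈ Icc t0 (σ ε), τ ∈ I := by
        intro τ hτ
        apply hballI
        simp only [Metric.mem_ball, Real.dist_eq]
        rw [abs_lt]
        exact ⟨by linarith [hτ.1], by linarith [hτ.2]⟩
      have := curve_trap (γ := fun τ => Q τ (u ε)) (γ' := fun τ => Qt τ (u ε))
        (z := z) (r := 1) (C := C) (a := t0) (b := σ ε) hc one_pos hC
        (fun τ hτ => (hQt τ (hIcc τ hτ) (u ε) huU).hasDerivWithinAt)
        (fun τ hτ hball => hspeed τ (hIcc τ hτ) (u ε) huU hball)
        (by norm_num at h3 ⊢; exact h3)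
        (by rw [habs] at h2; linarith [hlenC _ h2])
      have hfin := this (σ ε) ⟨hc, le_rfl⟩
      rw [habs]
      linarith [hfin]
    · -- σ ε ≤ t0
      have habs : |σ ε - t0| = t0 - σ ε := by
        rw [abs_of_nonpos (by linarith)]; ring
      have h1' : t0 - σ ε < δI := by rwa [habs] at h1
      have hIcc : ∀ τ ∈ Icc (σ ε) t0, τ ∈ I := by
        intro τ hτ
        apply hballI
        simp only [Metric.mem_ball, Real.dist_eq]
        rw [abs_lt]
        exact ⟨by linarith [hτ.1], by linarith [hτ.2]⟩
      have hstart : ‖Q (σ ε) (u ε) - z‖ < 1 / 2 := by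
        rw [hQκ]; exact h4
      have := curve_trap (γ := fun τ => Q τ (u ε)) (γ' := fun τ => Qt τ (u ε))
        (z := z) (r := 1) (C := C) (a := σ ε) (b := t0) hc one_pos hC
        (fun τ hτ => (hQt τ (hIcc τ hτ) (u ε) huU).hasDerivWithinAt)
        (fun τ hτ hball => hspeed τ (hIcc τ hτ) (u ε) huU hball)
        (by norm_num at hstart ⊢; exact hstart)
        (by rw [habs] at h2; linarith [hlenC _ h2])
      have hfin := this t0 ⟨hc, le_rfl⟩
      rw [habs, ← norm_sub_rev]
      linarith [hfin]
  -- little-o bookkeeping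
  have hσo : (fun ε => σ ε - t0) =o[nhds (0:ℝ)] (fun ε => ε) := by
    have h := hasDerivAt_iff_isLittleO.1 hσd
    simpa [hσ0] using h
  have hAeq : ∀ᶠ ε in nhds (0:ℝ), κ ε - Q t0 (u ε) = Q (σ ε) (u ε) - Q t0 (u ε) := by
    filter_upwards [hWev] with ε hWε
    rw [(hQinv (κ ε) hWε).2.2.1]
  have hAiso : (fun ε => κ ε - Q t0 (u ε)) =o[nhds (0:ℝ)] (fun ε => ε) := by
    have hbigO : (fun ε => κ ε - Q t0 (u ε)) =O[nhds (0:ℝ)] (fun ε => σ ε - t0) := by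
      rw [isBigO_iff]
      refine ⟨C, ?_⟩
      filter_upwards [hAbound, hAeq] with ε hb he
      rw [he]
      simpa [Real.norm_eq_abs] using hb
    exact hbigO.trans_isLittleO hσo
  have hAd : HasDerivAt (fun ε => κ ε - Q t0 (u ε)) v 0 := by
    have := hκd.sub hG
    rw [sub_zero] at this
    exact this
  have hvo : (fun ε : ℝ => ε • v) =o[nhds (0:ℝ)] (fun ε => ε) := by
    have h1 := hasDerivAt_iff_isLittleO.1 hAd
    have hA0 : κ 0 - Q t0 (u 0) = 0 := by
      rw [hκ0, hu0, hQz]; simp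
    simp only [sub_zero, hA0] at h1
    have h2 := hAiso.sub h1
    simpa using h2
  by_contra hvne
  have hvpos : 0 < ‖v‖ := norm_pos_iff.2 hvne
  have h3 := hvo.def (by positivity : (0:ℝ) < ‖v‖ / 2)
  rw [Metric.eventually_nhds_iff] at h3
  obtain ⟨δ, hδ, h4⟩ := h3
  have h5 := h4 (y := δ / 2) (by simp [Real.dist_eq]; rw [abs_of_nonneg (by linarith)]; linarith)
  rw [norm_smul] at h5
  simp only [Real.norm_eq_abs] at h5
  have h6 : |δ / 2| > 0 := by rw [abs_of_nonneg (by linarith)]; linarith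
  nlinarith [h5, h6, hvpos]

lemma open_image {n : ℕ} {W : Set (Eu (n+1))} (hW : IsOpen W) {p : Eu (n+1) → ℝ × Eu n}
    (hdiff : ∀ z ∈ W, DifferentiableAt ℝ p z)
    (hDinj : ∀ z ∈ W, ∀ v : Eu (n+1), fderiv ℝ p z v = 0 → v = 0)
    (hpinj : ∀ z1 ∈ W, ∀ z2 ∈ W, p z1 = p z2 → z1 = z2)
    {x : Eu (n+1)} (hx : x ∈ W) :
    ∃ ρ > 0, ∀ q : ℝ × Eu n, ‖q - p x‖ < ρ → ∃ z0 ∈ W, p z0 = q := by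
  obtain ⟨rb, hrb, hball⟩ := Metric.isOpen_iff.1 hW x hx
  have hrb2 : (0:ℝ) < rb / 2 := by linarith
  have hcb : Metric.closedBall x (rb/2) ⊆ W := fun z hz =>
    hball (lt_of_le_of_lt (Metric.mem_closedBall.1 hz) (by linarith))
  have pcont : ContinuousOn p (Metric.closedBall x (rb/2)) := fun z hz =>
    ((hdiff z (hcb hz)).continuousAt).continuousWithinAt
  have hSne : (Metric.sphere x (rb/2)).Nonempty := NormedSpace.sphere_nonempty.2 (le_of_lt hrb2)
  obtain ⟨zs, hzsS, hzsmin⟩ := (isCompact_sphere x (rb/2)).exists_isMinOn hSne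
    (((pcont.mono Metric.sphere_subset_closedBall).sub continuousOn_const).norm)
  set mm := ‖p zs - p x‖ with hmm
  have hm : 0 < mm := by
    rcases eq_or_lt_of_le (norm_nonneg (p zs - p x)) with h | h
    · exfalso
      have hpeq : p zs = p x := by
        have := h.symm
        rw [← hmm] at this
        have : p zs - p x = 0 := by
          rw [← norm_eq_zero]; exact this.symm ▸ rfl
        exact sub_eq_zero.1 this
      have hzsW : zs ∈ W := hcb (Metric.sphere_subset_closedBall hzsS)
      have : zs = x := hpinj zs hzsW x hx hpeq
      have hd : dist zs x = rb/2 := Metric.mem_sphere.1 hzsS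
      rw [this, dist_self] at hd
      linarith
    · exact h
  clear_value mm
  refine ⟨mm/4, by positivity, ?_⟩
  intro q hq
  set F : Eu (n+1) → ℝ :=
    fun z => ((p z).1 - q.1) * ((p z).1 - q.1) + ‖(p z).2 - q.2‖^2 with hFdef
  have Fcont : ContinuousOn F (Metric.closedBall x (rb/2)) := by
    apply ContinuousOn.add
    · exact ((pcont.fst.sub continuousOn_const).mul (pcont.fst.sub continuousOn_const))
    · exact ((pcont.snd.sub continuousOn_const).norm.pow 2)
  obtain ⟨z0, hz0cb, hz0min⟩ := (isCompact_closedBall x (rb/2)).exists_isMinOn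
    ⟨x, Metric.mem_closedBall_self (le_of_lt hrb2)⟩ Fcont
  -- component bounds
  have hcomp : ∀ P : ℝ × Eu n, |P.1| ≤ ‖P‖ ∧ ‖P.2‖ ≤ ‖P‖ := by
    intro P
    constructor
    · have := norm_fst_le P; simpa [Real.norm_eq_abs] using this
    · exact norm_snd_le P
  have hFx : F x ≤ 2 * (mm/4)^2 := by
    have h1 := (hcomp (p x - q)).1
    have h2 := (hcomp (p x - q)).2
    have h3 : ‖p x - q‖ < mm/4 := by rw [norm_sub_rev]; exact hq
    have e1 : (p x - q).1 = (p x).1 - q.1 := rfl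
    have e2 : (p x - q).2 = (p x).2 - q.2 := rfl
    rw [e1] at h1; rw [e2] at h2
    rw [hFdef]
    simp only []
    nlinarith [abs_nonneg ((p x).1 - q.1), norm_nonneg ((p x).2 - q.2),
      abs_mul_abs_self ((p x).1 - q.1)]
  have hFz0 : F z0 ≤ 2 * (mm/4)^2 :=
    le_trans (hz0min (Metric.mem_closedBall_self (le_of_lt hrb2))) hFx
  have hz0lt : dist z0 x < rb/2 := by
    rcases lt_or_eq_of_le (Metric.mem_closedBall.1 hz0cb) with h | h
    · exact h
    · exfalso
      have hz0S : z0 ∈ Metric.sphere x (rb/2) := Metric.mem_sphere.2 h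
      have hge : mm ≤ ‖p z0 - p x‖ := by rw [hmm]; exact hzsmin hz0S
      have htri : (3/4) * mm ≤ ‖p z0 - q‖ := by
        have := norm_sub_le (p z0 - q) (p x - q)
        have he : (p z0 - q) - (p x - q) = p z0 - p x := by abel
        rw [he] at this
        have h3 : ‖p x - q‖ < mm/4 := by rw [norm_sub_rev]; exact hq
        linarith
      have hsq : ‖p z0 - q‖^2 ≤ F z0 := by
        have h1 := (hcomp (p z0 - q)).1
        have h2 := (hcomp (p z0 - q)).2
        have e1 : (p z0 - q).1 = (p z0).1 - q.1 := rfl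
        have e2 : (p z0 - q).2 = (p z0).2 - q.2 := rfl
        rw [e1] at h1; rw [e2] at h2
        rw [Prod.norm_def] at h1 h2 ⊢
        rcases max_cases ‖(p z0 - q).1‖ ‖(p z0 - q).2‖ with ⟨hmax, -⟩ | ⟨hmax, -⟩ <;>
          rw [hFdef] <;> simp only [] <;> rw [hmax]
        · rw [e1, Real.norm_eq_abs, sq_abs, sq]
          nlinarith [sq_nonneg ‖(p z0).2 - q.2‖]
        · rw [e2]
          nlinarith [mul_self_nonneg ((p z0).1 - q.1)]
      have h9 : (3/4*mm)^2 ≤ ‖p z0 - q‖^2 := by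
        nlinarith [norm_nonneg (p z0 - q), htri, hm]
      have hchain : (3/4*mm)^2 ≤ 2*(mm/4)^2 := le_trans h9 (le_trans hsq hFz0)
      nlinarith [hchain, mul_pos hm hm]
  -- z0 is an interior local minimum
  have hz0W : z0 ∈ W := hcb hz0cb
  have hlocmin : IsLocalMin F z0 := by
    apply hz0min.isLocalMin
    exact Filter.mem_of_superset (Metric.isOpen_ball.mem_nhds (Metric.mem_ball.2 hz0lt))
      Metric.ball_subset_closedBall
  set D0 := fderiv ℝ p z0 with hD0
  have hd0 : HasFDerivAt p D0 z0 := (hdiff z0 hz0W).hasFDerivAt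
  set a := (p z0).1 - q.1 with ha
  set b := (p z0).2 - q.2 with hb
  have hfst : HasFDerivAt (fun z => (p z).1 - q.1)
      ((ContinuousLinearMap.fst ℝ ℝ (Eu n)).comp D0) z0 := (hd0.fst).sub_const q.1
  have hsnd : HasFDerivAt (fun z => (p z).2 - q.2)
      ((ContinuousLinearMap.snd ℝ ℝ (Eu n)).comp D0) z0 := (hd0.snd).sub_const q.2
  have hF1 := hfst.mul hfst
  have hF2 := hsnd.norm_sq
  have hF := hF1.add hF2
  have hzero := hlocmin.hasFDerivAt_eq_zero hF
  -- surjectivity of D0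
  have hinjD : Function.Injective D0 := by
    intro v w h
    have h2 : D0 (v - w) = 0 := by rw [map_sub, h, sub_self]
    have := hDinj z0 hz0W (v - w) h2
    exact sub_eq_zero.1 this
  have hfr : Module.finrank ℝ (Eu (n+1)) = Module.finrank ℝ (ℝ × Eu n) := by
    rw [finrank_euclideanSpace_fin, Module.finrank_prod, finrank_euclideanSpace_fin,
      Module.finrank_self]
    omega
  have hsurj : Function.Surjective D0 := by
    have h := (LinearMap.injective_iff_surjective_of_finrank_eq_finrank
      (f := (D0 : Eu (n+1) →ₗ[ℝ] ℝ × Eu n)) hfr).1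
    exact h hinjD
  obtain ⟨w, hw⟩ := hsurj (a, b)
  have happ := congrArg (fun (T : Eu (n+1) →L[ℝ] ℝ) => T w) hzero
  simp only [ContinuousLinearMap.add_apply, ContinuousLinearMap.smul_apply,
    ContinuousLinearMap.comp_apply, ContinuousLinearMap.coe_fst', ContinuousLinearMap.coe_snd',
    ContinuousLinearMap.zero_apply, innerSL_apply_apply, smul_eq_mul, hw] at happ
  -- happ : a * a + a * a + 2 * ⟪b, b⟫ = 0 roughly
  have hinner : ⟪b, b⟫ = ‖b‖^2 := real_inner_self_eq_norm_sq b
  rw [← hb, hinner, ← ha, nsmul_eq_mul] at happ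
  push_cast at happ
  have h2an : 0 ≤ a * a := mul_self_nonneg a
  have hbn : (0:ℝ) ≤ ‖b‖^2 := sq_nonneg _
  have haa : a * a = 0 := by linarith
  have hbb : ‖b‖^2 = 0 := by linarith
  have ha0 : a = 0 ∧ b = 0 := by
    refine ⟨mul_self_eq_zero.1 haa, ?_⟩
    have : ‖b‖ = 0 := by
      nlinarith [norm_nonneg b, sq_nonneg ‖b‖]
    exact norm_eq_zero.1 this
  refine ⟨z0, hz0W, ?_⟩
  have h1 : (p z0).1 = q.1 := sub_eq_zero.1 ha0.1
  have h2 : (p z0).2 = q.2 := sub_eq_zero.1 ha0.2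
  exact Prod.ext h1 h2

end AuxLemmas


/-- **The calibration 1-form is exact**: let `I ∋ 0` be an open interval,
`U'` open, and `Q, Λ` be `C¹` in `(t,x')` with existing and coinciding mixed
second partials of `Q`; if for each `x'` the curve `t ↦ (Q(t,x'), Λ(t,x'))` is a
normal extremal, `Σᵢ ⟨Λ, Xᵢ(Q)⟩² = 1` on `I × U'`, and `Λ(0,x')` annihilates
`∂Q/∂x'ⱼ(0,x')`, then `⟨Λ(t,x'), ∂Q/∂x'ⱼ(t,x')⟩ = 0` and
`⟨Λ(t,x'), ∂Q/∂t(t,x')⟩ = 1` on `I × U'`; in particular, if `Q` is a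
diffeomorphism onto an open set `W`, the 1-form `x ↦ Λ(Q⁻¹(x))` on `W` is exact
with primitive the `t`-component of `Q⁻¹`. -/
theorem calibration_one_form_exact
    (n m : ℕ) (X : Fin m → Eu (n + 1) → Eu (n + 1)) (hX : ∀ j, IsC11 (X j))
    (I : Set ℝ) (hIopen : IsOpen I) (hI0 : (0 : ℝ) ∈ I) (hIconn : I.OrdConnected)
    (U' : Set (Eu n)) (hU' : IsOpen U')
    (Q : ℝ → Eu n → Eu (n + 1)) (Λ : ℝ → Eu n → (Eu (n + 1) →L[ℝ] ℝ))
    -- the partial derivatives of `Q`: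
    (Qt : ℝ → Eu n → Eu (n + 1)) (Qx : ℝ → Eu n → (Eu n →L[ℝ] Eu (n + 1)))
    (hQt : ∀ t ∈ I, ∀ x' ∈ U', HasDerivAt (fun s => Q s x') (Qt t x') t)
    (hQx : ∀ t ∈ I, ∀ x' ∈ U', HasFDerivAt (fun y => Q t y) (Qx t x') x')
    -- the mixed second partial derivatives of `Q` exist and coincide:
    (hmixed : ∃ M : ℝ → Eu n → (Eu n →L[ℝ] Eu (n + 1)),
      (∀ t ∈ I, ∀ x' ∈ U', HasDerivAt (fun s => Qx s x') (M t x') t) ∧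
      (∀ t ∈ I, ∀ x' ∈ U', HasFDerivAt (fun y => Qt t y) (M t x') x'))
    -- for each fixed `x'`, `t ↦ (Q(t,x'), Λ(t,x'))` is a normal extremal:
    (hext : ∀ x' ∈ U', ∀ t ∈ I,
      HasDerivAt (fun s => Q s x')
        (∑ i, Λ t x' (X i (Q t x')) • X i (Q t x')) t ∧
      HasDerivAt (fun s => Λ s x')
        (-(∑ i, Λ t x' (X i (Q t x')) •
          ((Λ t x').comp (fderiv ℝ (X i) (Q t x'))))) t)
    -- unit Hamiltonian:
    (hham : ∀ t ∈ I, ∀ x' ∈ U', ∑ i, (Λ t x' (X i (Q t x'))) ^ 2 = 1)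
    -- `Λ(0,x')` vanishes on the image of `∂Q/∂x'(0,x')`:
    (hinit : ∀ x' ∈ U', ∀ v : Eu n, Λ 0 x' (Qx 0 x' v) = 0) :
    (∀ t ∈ I, ∀ x' ∈ U',
      (∀ v : Eu n, Λ t x' (Qx t x' v) = 0) ∧ Λ t x' (Qt t x') = 1) ∧
    (∀ (W : Set (Eu (n + 1))) (Qinv : Eu (n + 1) → ℝ × Eu n), IsOpen W →
      (∀ x ∈ W, (Qinv x).1 ∈ I ∧ (Qinv x).2 ∈ U' ∧
        Q (Qinv x).1 (Qinv x).2 = x ∧ DifferentiableAt ℝ Qinv x) →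
      ∀ x ∈ W, HasFDerivAt (fun y => (Qinv y).1) (Λ (Qinv x).1 (Qinv x).2) x) := by
  -- ===================== Part 1 =====================
  obtain ⟨M, hM1, hM2⟩ := hmixed
  have hpart1 : ∀ t ∈ I, ∀ x' ∈ U',
      (∀ v : Eu n, Λ t x' (Qx t x' v) = 0) ∧ Λ t x' (Qt t x') = 1 := by

    have hQtf : ∀ t ∈ I, ∀ y ∈ U', Qt t y = ∑ i, Λ t y (X i (Q t y)) • X i (Q t y) :=
      fun t ht y hy => (hQt t ht y hy).unique (hext y hy t ht).1
    have hXd : ∀ i (q : Eu (n+1)), HasFDerivAt (X i) (fderiv ℝ (X i) q) q :=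
      fun i q => ((((hX i).1).differentiable one_ne_zero) q).hasFDerivAt
    have hconv : Convex ℝ I := convex_iff_ordConnected.2 hIconn
    -- pairing of any covector with Qt
    have hpair : ∀ (l : Eu (n+1) →L[ℝ] ℝ), ∀ t ∈ I, ∀ y ∈ U',
        l (Qt t y) = ∑ i, (Λ t y (X i (Q t y))) * (l (X i (Q t y))) := by
      intro l t ht y hy
      rw [hQtf t ht y hy, map_sum]
      exact Finset.sum_congr rfl fun i _ => by
        rw [ContinuousLinearMap.map_smul, smul_eq_mul]
    have hself : ∀ t ∈ I, ∀ y ∈ U', Λ t y (Qt t y) = 1 := by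
      intro t ht y hy
      rw [hpair (Λ t y) t ht y hy, ← hham t ht y hy]
      exact Finset.sum_congr rfl fun i _ => by rw [sq]
    -- the key pointwise identity for `λ ∘ M`
    have hkey : ∀ τ ∈ I, ∀ x' ∈ U', ∀ v : Eu n,
        Λ τ x' (M τ x' v) = ∑ i, (Λ τ x' (X i (Q τ x'))) *
          (Λ τ x' (fderiv ℝ (X i) (Q τ x') (Qx τ x' v))) := by
      intro τ hτ x' hx' v
      have hci : ∀ i : Fin m, HasFDerivAt (fun y => Λ τ x' (X i (Q τ y)))
          (((Λ τ x').comp (fderiv ℝ (X i) (Q τ x'))).comp (Qx τ x')) x' := by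
        intro i
        have h1 : HasFDerivAt (fun y => X i (Q τ y))
            ((fderiv ℝ (X i) (Q τ x')).comp (Qx τ x')) x' :=
          (hXd i (Q τ x')).comp x' (hQx τ hτ x' hx')
        have h2 := (Λ τ x').hasFDerivAt.comp x' h1
        simpa [Function.comp_def, ContinuousLinearMap.comp_assoc] using h2
      have hφ : HasFDerivAt (fun y => Λ τ x' (Qt τ y)) ((Λ τ x').comp (M τ x')) x' :=
        (Λ τ x').hasFDerivAt.comp x' (hM2 τ hτ x' hx')
      have hS : HasFDerivAt (fun y => ∑ i, (Λ τ x' (X i (Q τ y))) * (Λ τ x' (X i (Q τ y))))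
          (∑ i, ((Λ τ x' (X i (Q τ x'))) •
              (((Λ τ x').comp (fderiv ℝ (X i) (Q τ x'))).comp (Qx τ x')) +
            (Λ τ x' (X i (Q τ x'))) •
              (((Λ τ x').comp (fderiv ℝ (X i) (Q τ x'))).comp (Qx τ x')))) x' :=
        HasFDerivAt.fun_sum fun i _ => (hci i).mul (hci i)
      have hN := hφ.sub (hS.const_mul (1/2 : ℝ))
      have hmax : IsLocalMax (fun y => Λ τ x' (Qt τ y) -
          (1/2) * ∑ i, (Λ τ x' (X i (Q τ y))) * (Λ τ x' (X i (Q τ y)))) x' := by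
        have hub : ∀ y ∈ U', Λ τ x' (Qt τ y) -
            (1/2) * ∑ i, (Λ τ x' (X i (Q τ y))) * (Λ τ x' (X i (Q τ y))) ≤ 1/2 := by
          intro y hy
          rw [hpair (Λ τ x') τ hτ y hy, Finset.mul_sum, ← Finset.sum_sub_distrib]
          have step : ∀ i : Fin m, (Λ τ y (X i (Q τ y))) * (Λ τ x' (X i (Q τ y)))
              - 1/2 * ((Λ τ x' (X i (Q τ y))) * (Λ τ x' (X i (Q τ y))))
              = 1/2 * (Λ τ y (X i (Q τ y)))^2
                - 1/2 * ((Λ τ y (X i (Q τ y))) - (Λ τ x' (X i (Q τ y))))^2 := by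
            intro i; ring
          rw [Finset.sum_congr rfl fun i _ => step i]
          rw [Finset.sum_sub_distrib, ← Finset.mul_sum, ← Finset.mul_sum, hham τ hτ y hy]
          have : (0:ℝ) ≤ ∑ i, ((Λ τ y (X i (Q τ y))) - (Λ τ x' (X i (Q τ y))))^2 :=
            Finset.sum_nonneg fun i _ => sq_nonneg _
          linarith
        have hval : Λ τ x' (Qt τ x') -
            (1/2) * ∑ i, (Λ τ x' (X i (Q τ x'))) * (Λ τ x' (X i (Q τ x'))) = 1/2 := by
          rw [hself τ hτ x' hx']
          have hs1 : ∑ i, (Λ τ x' (X i (Q τ x'))) * (Λ τ x' (X i (Q τ x'))) = 1 := by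
            rw [← hham τ hτ x' hx']
            exact Finset.sum_congr rfl fun i _ => (sq _).symm
          rw [hs1]
          norm_num
        rw [IsLocalMax, IsMaxFilter, hval]
        filter_upwards [hU'.mem_nhds hx'] with y hy
        exact hub y hy
      have hzero := hmax.hasFDerivAt_eq_zero hN
      have happ := congrArg (fun (T : Eu n →L[ℝ] ℝ) => T v) hzero
      simp only [ContinuousLinearMap.sub_apply, ContinuousLinearMap.smul_apply,
        ContinuousLinearMap.coe_sum', Finset.sum_apply, ContinuousLinearMap.add_apply,
        ContinuousLinearMap.comp_apply, ContinuousLinearMap.zero_apply, smul_eq_mul] at happ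
      have hsum2 : ∑ i, ((Λ τ x' (X i (Q τ x'))) *
            (Λ τ x' (fderiv ℝ (X i) (Q τ x') (Qx τ x' v))) +
          (Λ τ x' (X i (Q τ x'))) *
            (Λ τ x' (fderiv ℝ (X i) (Q τ x') (Qx τ x' v))))
          = 2 * ∑ i, (Λ τ x' (X i (Q τ x'))) *
            (Λ τ x' (fderiv ℝ (X i) (Q τ x') (Qx τ x' v))) := by
        rw [Finset.mul_sum]
        exact Finset.sum_congr rfl fun i _ => by ring
      rw [hsum2] at happ
      linarith
    intro t ht x' hx'
    refine ⟨?_, hself t ht x' hx'⟩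
    intro v
    have hderiv0 : ∀ τ ∈ I, HasDerivAt (fun s => Λ s x' (Qx s x' v)) 0 τ := by
      intro τ hτ
      have hΛ' := (hext x' hx' τ hτ).2
      have hQxv : HasDerivAt (fun s => Qx s x' v) (M τ x' v) τ := by
        have h := (hM1 τ hτ x' hx').clm_apply (hasDerivAt_const τ v)
        simpa using h
      have h := hΛ'.clm_apply hQxv
      refine h.congr_deriv ?_
      simp only [ContinuousLinearMap.neg_apply, ContinuousLinearMap.coe_sum',
        Finset.sum_apply, ContinuousLinearMap.smul_apply, ContinuousLinearMap.comp_apply,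
        smul_eq_mul]
      rw [hkey τ hτ x' hx' v]
      ring
    have hc := hconv.norm_image_sub_le_of_norm_hasDerivWithin_le (C := 0)
      (f' := fun _ => (0 : ℝ)) (fun τ hτ => (hderiv0 τ hτ).hasDerivWithinAt)
      (fun τ _ => by simp) hI0 ht
    simp only [norm_zero, zero_mul] at hc
    have heq : Λ t x' (Qx t x' v) = Λ 0 x' (Qx 0 x' v) :=
      sub_eq_zero.1 (norm_le_zero_iff.1 hc)
    rw [heq, hinit x' hx' v]

  refine ⟨hpart1, ?_⟩
  -- ===================== Part 2 =====================
  have hQtf : ∀ t ∈ I, ∀ y ∈ U', Qt t y = ∑ i, Λ t y (X i (Q t y)) • X i (Q t y) :=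
    fun t ht y hy => (hQt t ht y hy).unique (hext y hy t ht).1
  intro W Qinv hWopen hQinv x hxW
  obtain ⟨ht0, hy0, hQxeq, hdx⟩ := hQinv x hxW
  set t0 := (Qinv x).1 with ht0def
  set y0 := (Qinv x).2 with hy0def
  -- the single-vector-field bound
  have hb1 : ∀ t ∈ I, ∀ y ∈ U', ∀ i, |Λ t y (X i (Q t y))| ≤ 1 := by
    intro t ht y hy i
    have h := hham t ht y hy
    have hle : (Λ t y (X i (Q t y)))^2 ≤ 1 := by
      rw [← h]
      exact Finset.single_le_sum (f := fun j => (Λ t y (X j (Q t y)))^2)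
        (fun j _ => sq_nonneg _) (Finset.mem_univ i)
    exact (sq_le_one_iff_abs_le_one _).1 hle
  have hXc : Continuous (fun w : Eu (n+1) => ∑ i, ‖X i w‖) := by
    apply continuous_finset_sum
    intro i _
    exact ((hX i).1.continuous).norm
  have hspeedC : ∀ z : Eu (n+1), ∃ C : ℝ, 0 ≤ C ∧
      ∀ τ ∈ I, ∀ y ∈ U', ‖Q τ y - z‖ ≤ 1 → ‖Qt τ y‖ ≤ C := by
    intro z
    obtain ⟨wmax, hwmem, hwmax⟩ := (isCompact_closedBall z 1).exists_isMaxOn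
      ⟨z, Metric.mem_closedBall_self zero_le_one⟩ hXc.continuousOn
    refine ⟨∑ i, ‖X i wmax‖, Finset.sum_nonneg (fun i _ => norm_nonneg _), ?_⟩
    intro τ hτ y hy hball
    rw [hQtf τ hτ y hy]
    calc ‖∑ i, Λ τ y (X i (Q τ y)) • X i (Q τ y)‖
        ≤ ∑ i, ‖Λ τ y (X i (Q τ y)) • X i (Q τ y)‖ := norm_sum_le _ _
      _ ≤ ∑ i, ‖X i (Q τ y)‖ := by
          apply Finset.sum_le_sum
          intro i _
          rw [norm_smul, Real.norm_eq_abs]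
          have h := hb1 τ hτ y hy i
          nlinarith [norm_nonneg (X i (Q τ y)), abs_nonneg (Λ τ y (X i (Q τ y)))]
      _ ≤ ∑ i, ‖X i wmax‖ := hwmax (Metric.mem_closedBall.2 (by
            rw [dist_eq_norm]; exact hball))
  have hDinj : ∀ z ∈ W, ∀ v : Eu (n+1), fderiv ℝ Qinv z v = 0 → v = 0 := by
    intro z hz
    obtain ⟨C, hC, hspeed⟩ := hspeedC z
    exact deriv_inj hIopen hQt hQx hWopen hQinv hz hC hspeed
  have hpinj : ∀ z1 ∈ W, ∀ z2 ∈ W, Qinv z1 = Qinv z2 → z1 = z2 := by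
    intro z1 h1 z2 h2 he
    have e1 := (hQinv z1 h1).2.2.1
    have e2 := (hQinv z2 h2).2.2.1
    rw [← e1, ← e2, he]
  have hdiffW : ∀ z ∈ W, DifferentiableAt ℝ Qinv z := fun z hz => (hQinv z hz).2.2.2
  obtain ⟨ρ, hρ, hρball⟩ := open_image hWopen hdiffW hDinj hpinj hxW
  have hQx_pair : Qinv x = (t0, y0) := by
    rw [ht0def, hy0def]
  -- identity along the time line
  have hline1 : (fun σ => Qinv (Q σ y0)) =ᶠ[nhds t0] (fun σ => ((σ, y0) : ℝ × Eu n)) := by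
    filter_upwards [Metric.ball_mem_nhds t0 hρ] with σ hσ
    have hnear : ‖((σ, y0) : ℝ × Eu n) - Qinv x‖ < ρ := by
      rw [hQx_pair]
      have he : ((σ, y0) : ℝ × Eu n) - (t0, y0) = ((σ - t0 : ℝ), (0 : Eu n)) := by
        simp [Prod.ext_iff]
      rw [he, Prod.norm_def]
      simp only [norm_zero, Real.norm_eq_abs]
      rw [max_eq_left (abs_nonneg _)]
      simpa [Real.dist_eq] using hσ
    obtain ⟨z0, hz0W, hz0⟩ := hρball (σ, y0) hnear
    have hz0e := (hQinv z0 hz0W).2.2.1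
    rw [hz0] at hz0e
    simp only at hz0e
    rw [hz0e, hz0]
  have hline2 : ∀ w : Eu n, (fun ε : ℝ => Qinv (Q t0 (y0 + ε • w)))
      =ᶠ[nhds (0:ℝ)] (fun ε => ((t0, y0 + ε • w) : ℝ × Eu n)) := by
    intro w
    have hsmall : ∀ᶠ ε : ℝ in nhds 0, |ε| * ‖w‖ < ρ := by
      have hcont : Continuous (fun ε : ℝ => |ε| * ‖w‖) :=
        continuous_abs.mul continuous_const
      have htend : Filter.Tendsto (fun ε : ℝ => |ε| * ‖w‖) (nhds 0) (nhds 0) := by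
        simpa using hcont.tendsto 0
      exact htend (Iio_mem_nhds hρ)
    filter_upwards [hsmall] with ε hε
    have hnear : ‖((t0, y0 + ε • w) : ℝ × Eu n) - Qinv x‖ < ρ := by
      rw [hQx_pair]
      have he : ((t0, y0 + ε • w) : ℝ × Eu n) - (t0, y0) = ((0:ℝ), ε • w) := by
        simp [Prod.ext_iff]
      rw [he, Prod.norm_def]
      simp only [norm_zero, Real.norm_eq_abs]
      rw [max_eq_right (norm_nonneg _)]
      rw [norm_smul, Real.norm_eq_abs]
      exact hε
    obtain ⟨z0, hz0W, hz0⟩ := hρball (t0, y0 + ε • w) hnear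
    have hz0e := (hQinv z0 hz0W).2.2.1
    rw [hz0] at hz0e
    simp only at hz0e
    rw [hz0e, hz0]
  -- derivative identities
  have hD1 : fderiv ℝ Qinv x (Qt t0 y0) = ((1:ℝ), (0 : Eu n)) := by
    have hcurve : HasDerivAt (fun σ => Q σ y0) (Qt t0 y0) t0 := hQt t0 ht0 y0 hy0
    have hcomp : HasDerivAt (fun σ => Qinv (Q σ y0)) (fderiv ℝ Qinv x (Qt t0 y0)) t0 := by
      have h : HasFDerivAt Qinv (fderiv ℝ Qinv x) (Q t0 y0) := by
        rw [hQxeq]; exact hdx.hasFDerivAt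
      simpa [Function.comp_def] using h.comp_hasDerivAt t0 hcurve
    have hid : HasDerivAt (fun σ => ((σ, y0) : ℝ × Eu n)) ((1:ℝ), (0:Eu n)) t0 :=
      (hasDerivAt_id t0).prodMk (hasDerivAt_const t0 y0)
    have h2 : HasDerivAt (fun σ => Qinv (Q σ y0)) ((1:ℝ), (0:Eu n)) t0 :=
      hid.congr_of_eventuallyEq hline1
    exact hcomp.unique h2
  have hD2 : ∀ w : Eu n, fderiv ℝ Qinv x (Qx t0 y0 w) = ((0:ℝ), w) := by
    intro w
    have hlin : HasDerivAt (fun ε : ℝ => y0 + ε • w) w 0 := by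
      simpa using ((hasDerivAt_id (0:ℝ)).smul_const w).const_add y0
    have hcurve : HasDerivAt (fun ε : ℝ => Q t0 (y0 + ε • w)) (Qx t0 y0 w) 0 := by
      have h : HasFDerivAt (fun y => Q t0 y) (Qx t0 y0) ((fun ε : ℝ => y0 + ε • w) 0) := by
        simpa using hQx t0 ht0 y0 hy0
      simpa [Function.comp_def] using h.comp_hasDerivAt 0 hlin
    have hcomp : HasDerivAt (fun ε : ℝ => Qinv (Q t0 (y0 + ε • w)))
        (fderiv ℝ Qinv x (Qx t0 y0 w)) 0 := by
      have h : HasFDerivAt Qinv (fderiv ℝ Qinv x) (Q t0 (y0 + (0:ℝ) • w)) := by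
        simp only [zero_smul, add_zero]
        rw [hQxeq]; exact hdx.hasFDerivAt
      simpa [Function.comp_def] using h.comp_hasDerivAt 0 hcurve
    have hid : HasDerivAt (fun ε : ℝ => ((t0, y0 + ε • w) : ℝ × Eu n)) ((0:ℝ), w) 0 :=
      (hasDerivAt_const (0:ℝ) t0).prodMk hlin
    have h2 : HasDerivAt (fun ε : ℝ => Qinv (Q t0 (y0 + ε • w))) ((0:ℝ), w) 0 :=
      hid.congr_of_eventuallyEq (hline2 w)
    exact hcomp.unique h2
  -- the candidate total derivative of Q at (t0, y0)
  set T : (ℝ × Eu n) →L[ℝ] Eu (n+1) :=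
    (ContinuousLinearMap.fst ℝ ℝ (Eu n)).smulRight (Qt t0 y0) +
      (Qx t0 y0).comp (ContinuousLinearMap.snd ℝ ℝ (Eu n)) with hTdef
  have hTapp : ∀ a : ℝ, ∀ w : Eu n, T (a, w) = a • Qt t0 y0 + Qx t0 y0 w := by
    intro a w
    rw [hTdef]
    simp [ContinuousLinearMap.smulRight_apply]
  have hDT : ∀ aw : ℝ × Eu n, fderiv ℝ Qinv x (T aw) = aw := by
    rintro ⟨a, w⟩
    rw [hTapp, map_add, ContinuousLinearMap.map_smul, hD1, hD2]
    simp [Prod.ext_iff]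
  have hTinj : Function.Injective T := by
    intro u1 u2 h
    have h2 := congrArg (fderiv ℝ Qinv x) h
    rw [hDT u1, hDT u2] at h2
    exact h2
  have hfr : Module.finrank ℝ (ℝ × Eu n) = Module.finrank ℝ (Eu (n+1)) := by
    rw [finrank_euclideanSpace_fin, Module.finrank_prod, finrank_euclideanSpace_fin,
      Module.finrank_self]
    omega
  have hTsurj : Function.Surjective T := by
    have h := (LinearMap.injective_iff_surjective_of_finrank_eq_finrank
      (f := (T : (ℝ × Eu n) →ₗ[ℝ] Eu (n+1))) hfr).1
    exact h hTinj
  obtain ⟨hker, hone⟩ := hpart1 t0 ht0 y0 hy0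
  have hgoal : (ContinuousLinearMap.fst ℝ ℝ (Eu n)).comp (fderiv ℝ Qinv x) = Λ t0 y0 := by
    apply ContinuousLinearMap.ext
    intro v
    obtain ⟨⟨a, w⟩, hv⟩ := hTsurj v
    rw [← hv]
    have h1 := hDT (a, w)
    have hL : Λ t0 y0 (T (a, w)) = a := by
      rw [hTapp, map_add, ContinuousLinearMap.map_smul, smul_eq_mul, hone, hker w]
      ring
    rw [hL]
    simp only [ContinuousLinearMap.comp_apply, h1, ContinuousLinearMap.coe_fst']
  have hfst : HasFDerivAt (fun z => (Qinv z).1)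
      ((ContinuousLinearMap.fst ℝ ℝ (Eu n)).comp (fderiv ℝ Qinv x)) x :=
    hdx.hasFDerivAt.fst
  rw [← hgoal]
  exact hfst

end
end

section
/- (Existence of a quasi-calibration.) Let p ∈ U with X₁(p) ≠ 0, and let h̄ ∈ ℝᵐ be the element of minimal Euclidean norm among solutions of Σⱼ h̄ⱼ Xⱼ(p) = X₁(p) (so h̄ ≠ 0). Then for every ε > 0 there exist an open neighbourhood U_ε ⊆ U of p and a linear functional ℓ ∈ (ℝⁿ)* such that for every q ∈ U_ε: (i) |⟨ℓ, Σⱼ hⱼ Xⱼ(q)⟩| ≤ (1+ε)|h| for every h ∈ ℝᵐ, and (ii) ⟨ℓ, Σⱼ (h̄ⱼ/|h̄|) Xⱼ(q)⟩ ≥ 1 − ε². -/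
open Set
open scoped InnerProductSpace

noncomputable section

lemma range_adjoint_eq_orth {n m : ℕ} (A : Eu m →ₗ[ℝ] Eu n) :
    LinearMap.range (LinearMap.adjoint A) = (LinearMap.ker A)ᗮ := by
  have h1 : (LinearMap.range (LinearMap.adjoint A))ᗮ = LinearMap.ker A := by
    ext x
    simp only [Submodule.mem_orthogonal, LinearMap.mem_range, LinearMap.mem_ker]
    constructor
    · intro hx
      apply ext_inner_right ℝ
      intro y
      have := hx (LinearMap.adjoint A y) ⟨y, rfl⟩
      rw [LinearMap.adjoint_inner_left] at this
      rw [inner_zero_left, real_inner_comm]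
      exact this
    · rintro hx u ⟨y, rfl⟩
      rw [LinearMap.adjoint_inner_left, hx, inner_zero_right]
  rw [← h1, Submodule.orthogonal_orthogonal]

/-- **Existence of a quasi-calibration** (continuous vector fields, no
bracket-generating or independence assumption): let `p ∈ U` with `X₁(p) ≠ 0`
and let `h̄` be the minimal-norm solution of `Σⱼ h̄ⱼ Xⱼ(p) = X₁(p)`. Then for
every `ε > 0` there are an open neighbourhood `U_ε ⊆ U` of `p` and a linear
functional `ℓ` such that, on `U_ε`, (i) `|⟨ℓ, Σⱼ hⱼ Xⱼ(q)⟩| ≤ (1+ε)|h|` for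
every `h ∈ ℝᵐ` and (ii) `⟨ℓ, Σⱼ (h̄ⱼ/|h̄|) Xⱼ(q)⟩ ≥ 1 - ε²`. -/
theorem exists_quasi_calibration
    (n m : ℕ) (hm : 1 ≤ m)
    (U : Set (Eu n)) (hU : IsOpen U)
    (X : Fin m → Eu n → Eu n)
    (hX : ∀ j, ContinuousOn (X j) U)
    (hnz : ∀ q ∈ U, ∃ i, X i q ≠ 0)
    (p : Eu n) (hp : p ∈ U) (hX1p : X ⟨0, hm⟩ p ≠ 0)
    (hbar : Eu m)
    (hbarsol : ∑ j, hbar j • X j p = X ⟨0, hm⟩ p)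
    (hbarmin : ∀ h : Eu m, (∑ j, h j • X j p = X ⟨0, hm⟩ p) → ‖hbar‖ ≤ ‖h‖)
    (ε : ℝ) (hε : 0 < ε) :
    ∃ Uε : Set (Eu n), IsOpen Uε ∧ Uε ⊆ U ∧ p ∈ Uε ∧
      ∃ ℓ : Eu n →L[ℝ] ℝ, ∀ q ∈ Uε,
        (∀ h : Eu m, |ℓ (∑ j, h j • X j q)| ≤ (1 + ε) * ‖h‖) ∧
        1 - ε ^ 2 ≤ ℓ (∑ j, (hbar j / ‖hbar‖) • X j q) := by
  classical
  -- the linear map A : h ↦ Σ hⱼ Xⱼ(p)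
  set A : Eu m →ₗ[ℝ] Eu n :=
    { toFun := fun h => ∑ j, h j • X j p,
      map_add' := by intro a b; simp [add_smul, Finset.sum_add_distrib],
      map_smul' := by intro c a; simp [smul_smul, Finset.smul_sum] } with hAdef
  have hAapp : ∀ h : Eu m, A h = ∑ j, h j • X j p := fun _ => rfl
  have hbar_ne : hbar ≠ 0 := by
    intro h0
    apply hX1p
    rw [← hbarsol, h0]
    simp
  have hbarpos : (0:ℝ) < ‖hbar‖ := norm_pos_iff.mpr hbar_ne
  -- hbar is orthogonal to ker A
  have horth : hbar ∈ (LinearMap.ker A)ᗮ := by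
    rw [Submodule.mem_orthogonal]
    intro k hk
    rw [LinearMap.mem_ker] at hk
    by_cases hk0 : k = 0
    · simp [hk0]
    have hknorm : (0:ℝ) < ‖k‖ := norm_pos_iff.mpr hk0
    have key : ∀ t : ℝ, ‖hbar‖ ≤ ‖hbar + t • k‖ := by
      intro t
      apply hbarmin
      have : ∑ j, (hbar + t • k) j • X j p = A (hbar + t • k) := (hAapp _).symm
      rw [this, map_add, map_smul, hk, smul_zero, add_zero, hAapp, hbarsol]
    have hk2 : (0:ℝ) < ‖k‖ ^ 2 := by positivity
    have h1 : ‖hbar‖ ^ 2 ≤ ‖hbar + (-⟪hbar, k⟫_ℝ/‖k‖^2) • k‖ ^ 2 := by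
      have := key (-⟪hbar, k⟫_ℝ/‖k‖^2)
      nlinarith [norm_nonneg hbar, norm_nonneg (hbar + (-⟪hbar, k⟫_ℝ/‖k‖^2) • k)]
    rw [norm_add_sq_real, real_inner_smul_right, norm_smul, Real.norm_eq_abs, mul_pow,
      sq_abs] at h1
    have h2 : 0 ≤ 2*((-⟪hbar, k⟫_ℝ/‖k‖^2) * ⟪hbar, k⟫_ℝ) +
        (-⟪hbar, k⟫_ℝ/‖k‖^2)^2 * ‖k‖^2 := by linarith
    have h3 : (2*((-⟪hbar, k⟫_ℝ/‖k‖^2) * ⟪hbar, k⟫_ℝ) +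
        (-⟪hbar, k⟫_ℝ/‖k‖^2)^2 * ‖k‖^2) * ‖k‖^2 = -(⟪hbar, k⟫_ℝ^2) := by
      field_simp
      ring
    have ha2 : ⟪hbar, k⟫_ℝ ^ 2 ≤ 0 := by nlinarith [mul_nonneg h2 hk2.le]
    have ha0 : ⟪hbar, k⟫_ℝ = 0 := sq_eq_zero_iff.mp (le_antisymm ha2 (sq_nonneg _))
    rw [real_inner_comm]
    exact ha0
  -- hbar is in the range of the adjoint
  have hrange : hbar ∈ LinearMap.range (LinearMap.adjoint A) := by
    rw [range_adjoint_eq_orth]; exact horth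
  obtain ⟨ξ, hξ⟩ := hrange
  -- the functional ℓ
  set ℓ : Eu n →L[ℝ] ℝ := ‖hbar‖⁻¹ • innerSL ℝ ξ with hℓdef
  have hℓapp : ∀ v : Eu n, ℓ v = ‖hbar‖⁻¹ * ⟪ξ, v⟫_ℝ := fun v => rfl
  -- ℓ (A h) = ⟪hbar, h⟫ / ‖hbar‖
  have hℓA : ∀ h : Eu m, ℓ (A h) = ‖hbar‖⁻¹ * ⟪hbar, h⟫_ℝ := by
    intro h
    rw [hℓapp, ← LinearMap.adjoint_inner_left, hξ]
  -- the coefficient map c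
  set c : Eu n → Eu m := fun q => WithLp.toLp 2 (fun j => ℓ (X j q) : Fin m → ℝ) with hcdef
  have hkey : ∀ (q : Eu n) (h : Eu m), ℓ (∑ j, h j • X j q) = ⟪h, c q⟫_ℝ := by
    intro q h
    rw [map_sum]
    simp only [map_smul, smul_eq_mul, PiLp.inner_apply, RCLike.inner_apply, conj_trivial]
    exact Finset.sum_congr rfl fun x _ => mul_comm _ _
  -- c p = hbar / ‖hbar‖
  have hcp : c p = ‖hbar‖⁻¹ • hbar := by
    ext j
    have hsingle : A (EuclideanSpace.single j (1:ℝ)) = X j p := by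
      rw [hAapp]
      rw [Finset.sum_eq_single j]
      · simp
      · intro i _ hij
        simp [EuclideanSpace.single_apply, hij]
      · simp
    have : c p j = ℓ (X j p) := rfl
    rw [this, ← hsingle, hℓA]
    have : ⟪hbar, EuclideanSpace.single j (1:ℝ)⟫_ℝ = hbar j := by
      simp [PiLp.inner_apply, EuclideanSpace.single_apply]
    rw [this]
    simp [mul_comm]
  have hcpnorm : ‖c p‖ = 1 := by
    rw [hcp, norm_smul, norm_inv, norm_norm, inv_mul_cancel₀ (ne_of_gt hbarpos)]
  -- continuity of c
  have hccont : ContinuousOn c U := by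
    have : ContinuousOn (fun q => (fun j => ℓ (X j q) : Fin m → ℝ)) U :=
      continuousOn_pi.mpr fun j => ℓ.continuous.comp_continuousOn (hX j)
    exact (PiLp.continuous_toLp 2 (fun _ : Fin m => ℝ)).comp_continuousOn this
  -- the neighbourhood
  set δ : ℝ := min ε (ε ^ 2) with hδdef
  have hδpos : 0 < δ := lt_min hε (by positivity)
  refine ⟨U ∩ {q | ‖c q - c p‖ < δ}, ?_, inter_subset_left, ⟨hp, by simp [hδpos]⟩, ℓ, ?_⟩
  · have : U ∩ {q | ‖c q - c p‖ < δ} = U ∩ (fun q => ‖c q - c p‖) ⁻¹' (Iio δ) := rfl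
    rw [this]
    exact ContinuousOn.isOpen_inter_preimage
      ((hccont.sub continuousOn_const).norm) hU isOpen_Iio
  · rintro q ⟨hqU, hqδ⟩
    simp only [mem_setOf_eq] at hqδ
    have hδε : ‖c q - c p‖ ≤ ε := le_of_lt (lt_of_lt_of_le hqδ (min_le_left _ _))
    have hδε2 : ‖c q - c p‖ ≤ ε ^ 2 := le_of_lt (lt_of_lt_of_le hqδ (min_le_right _ _))
    have hcq : ‖c q‖ ≤ 1 + ε := by
      calc ‖c q‖ = ‖c p + (c q - c p)‖ := by rw [add_sub_cancel]
        _ ≤ ‖c p‖ + ‖c q - c p‖ := norm_add_le _ _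
        _ ≤ 1 + ε := by rw [hcpnorm]; linarith
    constructor
    · intro h
      rw [hkey]
      calc |⟪h, c q⟫_ℝ| ≤ ‖h‖ * ‖c q‖ := abs_real_inner_le_norm _ _
        _ ≤ ‖h‖ * (1 + ε) := by
            exact mul_le_mul_of_nonneg_left hcq (norm_nonneg h)
        _ = (1 + ε) * ‖h‖ := mul_comm _ _
    · have hw : (fun j => hbar j / ‖hbar‖ : Fin m → ℝ) = (c p : Fin m → ℝ) := by
        funext j
        rw [hcp]
        simp [div_eq_inv_mul]
      have : ∑ j, (hbar j / ‖hbar‖) • X j q = ∑ j, (c p) j • X j q := by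
        apply Finset.sum_congr rfl
        intro j _
        rw [← congrFun hw j]
      rw [this, hkey]
      have hexp : ⟪c p, c q⟫_ℝ = 1 + ⟪c p, c q - c p⟫_ℝ := by
        rw [inner_sub_right]
        have : ⟪c p, c p⟫_ℝ = 1 := by
          rw [real_inner_self_eq_norm_sq, hcpnorm]; norm_num
        rw [this]; ring
      rw [hexp]
      have : |⟪c p, c q - c p⟫_ℝ| ≤ ‖c q - c p‖ := by
        calc |⟪c p, c q - c p⟫_ℝ| ≤ ‖c p‖ * ‖c q - c p‖ := abs_real_inner_le_norm _ _
          _ = ‖c q - c p‖ := by rw [hcpnorm, one_mul]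
      have := abs_le.mp this
      linarith [hδε2, this.1]

end
end

section
/- (Quasi-calibration implies an almost-sharp length lower bound.) Let W ⊆ U be open, ε ∈ (0,1), ℓ ∈ (ℝⁿ)* and h̄ ∈ ℝᵐ with h̄ ≠ 0, and assume that for every q ∈ W: (i) |⟨ℓ, Σⱼ hⱼ Xⱼ(q)⟩| ≤ (1+ε)|h| for every h ∈ ℝᵐ, and (ii) ⟨ℓ, Σⱼ (h̄ⱼ/|h̄|) Xⱼ(q)⟩ ≥ 1 − ε². Let γ₀ : [s₁, s₂] → W be an absolutely continuous solution of γ₀'(t) = Σⱼ (h̄ⱼ/|h̄|) Xⱼ(γ₀(t)). Then every admissible curve γ : [a,b] → W with γ(a) = γ₀(s₁) and γ(b) = γ₀(s₂) satisfies L(γ) ≥ (s₂ − s₁)(1 − ε). -/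
open MeasureTheory Set
open scoped ENNReal

noncomputable section

/-- **A quasi-calibration implies an almost-sharp length lower bound**
(continuous vector fields): if `ℓ` satisfies, on the open set `W ⊆ U`,
(i) `|⟨ℓ, Σⱼ hⱼ Xⱼ(q)⟩| ≤ (1+ε)|h|` and (ii) `⟨ℓ, Σⱼ (h̄ⱼ/|h̄|) Xⱼ(q)⟩ ≥ 1-ε²`,
and `γ₀ : [s₁,s₂] → W` is an absolutely continuous solution of
`γ₀' = Σⱼ (h̄ⱼ/|h̄|) Xⱼ(γ₀)`, then every admissible curve in `W` joining
`γ₀(s₁)` and `γ₀(s₂)` has length at least `(s₂ - s₁)(1 - ε)`. -/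
theorem quasi_calibration_length_lower_bound
    (n m : ℕ)
    (U : Set (Eu n)) (hU : IsOpen U)
    (X : Fin m → Eu n → Eu n)
    (hX : ∀ j, ContinuousOn (X j) U)
    (hnz : ∀ q ∈ U, ∃ i, X i q ≠ 0)
    (W : Set (Eu n)) (hW : IsOpen W) (hWU : W ⊆ U)
    (ε : ℝ) (hε0 : 0 < ε) (hε1 : ε < 1)
    (ℓ : Eu n →L[ℝ] ℝ) (hbar : Eu m) (hbar0 : hbar ≠ 0)
    (hcal₁ : ∀ q ∈ W, ∀ h : Eu m, |ℓ (∑ j, h j • X j q)| ≤ (1 + ε) * ‖h‖)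
    (hcal₂ : ∀ q ∈ W, 1 - ε ^ 2 ≤ ℓ (∑ j, (hbar j / ‖hbar‖) • X j q))
    (s₁ s₂ : ℝ) (hs : s₁ ≤ s₂)
    (γ₀ : ℝ → Eu n)
    (hγ₀W : ∀ t ∈ Icc s₁ s₂, γ₀ t ∈ W)
    (hγ₀ : IsControlOf X s₁ s₂ γ₀ (fun _ => ‖hbar‖⁻¹ • hbar)) :
    ∀ (a b : ℝ) (γ : ℝ → Eu n), a ≤ b →
      (∀ t ∈ Icc a b, γ t ∈ W) →
      (∃ h, IsControlOf X a b γ h) →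
      γ a = γ₀ s₁ → γ b = γ₀ s₂ →
      ENNReal.ofReal ((s₂ - s₁) * (1 - ε)) ≤ ccLength X a b γ := by
  intro a b γ hab hγW _hex ha hb
  refine le_iInf fun h => le_iInf fun hctrl => ?_
  obtain ⟨hmeas, hint, heq⟩ := hctrl
  obtain ⟨hmeas₀, hint₀, heq₀⟩ := hγ₀
  set F : ℝ → Eu n := fun t => ∑ j, h t j • X j (γ t) with hF
  set F₀ : ℝ → Eu n := fun t => ∑ j, ((‖hbar‖⁻¹ • hbar : Eu m)) j • X j (γ₀ t) with hF₀
  set I : ℝ≥0∞ := ∫⁻ t in Icc a b, (‖h t‖₊ : ℝ≥0∞) with hI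
  -- rewrite the γ₀-integrand as in hcal₂
  have hF₀eq : ∀ t, F₀ t = ∑ j, (hbar j / ‖hbar‖) • X j (γ₀ t) := by
    intro t
    refine Finset.sum_congr rfl fun j _ => ?_
    congr 1
    simp [PiLp.smul_apply, smul_eq_mul, div_eq_inv_mul]
  -- interval integrabilities
  have hiF : IntervalIntegrable F volume a b := by
    rw [intervalIntegrable_iff']; rwa [uIcc_of_le hab]
  have hiF₀ : IntervalIntegrable F₀ volume s₁ s₂ := by
    rw [intervalIntegrable_iff']; rwa [uIcc_of_le hs]
  have hiℓF : IntervalIntegrable (fun t => ℓ (F t)) volume a b := by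
    rw [intervalIntegrable_iff'] at hiF ⊢
    exact ℓ.integrable_comp hiF
  have hiℓF₀ : IntervalIntegrable (fun t => ℓ (F₀ t)) volume s₁ s₂ := by
    rw [intervalIntegrable_iff'] at hiF₀ ⊢
    exact ℓ.integrable_comp hiF₀
  -- lower bound on calibrated side
  have hlow : (s₂ - s₁) * (1 - ε ^ 2) ≤ ∫ t in s₁..s₂, ℓ (F₀ t) := by
    have := intervalIntegral.integral_mono_on hs
      (intervalIntegrable_const (c := 1 - ε ^ 2)) hiℓF₀
      (fun t ht => by rw [hF₀eq t]; exact hcal₂ (γ₀ t) (hγ₀W t ht))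
    rwa [intervalIntegral.integral_const, smul_eq_mul] at this
  -- identify the two endpoint pairings via ℓ
  have hend : ∫ t in s₁..s₂, ℓ (F₀ t) = ∫ t in a..b, ℓ (F t) := by
    rw [ℓ.intervalIntegral_comp_comm hiF₀, ℓ.intervalIntegral_comp_comm hiF]
    have e₀ : γ₀ s₂ = γ₀ s₁ + ∫ s in s₁..s₂, F₀ s := heq₀ s₂ ⟨hs, le_refl _⟩
    have e : γ b = γ a + ∫ s in a..b, F s := heq b ⟨hab, le_refl _⟩
    have : (∫ s in s₁..s₂, F₀ s) = ∫ s in a..b, F s := by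
      have h1 : (∫ s in s₁..s₂, F₀ s) = γ₀ s₂ - γ₀ s₁ := by rw [e₀]; abel
      have h2 : (∫ s in a..b, F s) = γ b - γ a := by rw [e]; abel
      rw [h1, h2, ha, hb]
    rw [this]
  -- bound interval integral by integral of norms over Icc
  have habs : (∫ t in a..b, ℓ (F t)) ≤ ∫ t in Icc a b, ‖ℓ (F t)‖ := by
    have h1 : (∫ t in a..b, ℓ (F t)) ≤ ∫ t in a..b, ‖ℓ (F t)‖ :=
      intervalIntegral.integral_mono_on hab hiℓF hiℓF.norm
        (fun t _ => le_abs_self _)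
    have h2 : (∫ t in a..b, ‖ℓ (F t)‖) = ∫ t in Icc a b, ‖ℓ (F t)‖ := by
      rw [intervalIntegral.integral_of_le hab, MeasureTheory.integral_Icc_eq_integral_Ioc]
    linarith [h1, h2.le, h2.ge]
  -- key lintegral bound
  have hkey : (∫⁻ t in Icc a b, (‖ℓ (F t)‖₊ : ℝ≥0∞)) ≤ ENNReal.ofReal (1 + ε) * I := by
    have hmono : (∫⁻ t in Icc a b, (‖ℓ (F t)‖₊ : ℝ≥0∞)) ≤
        ∫⁻ t in Icc a b, ENNReal.ofReal (1 + ε) * (‖h t‖₊ : ℝ≥0∞) := by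
      refine lintegral_mono_ae ?_
      filter_upwards [ae_restrict_mem measurableSet_Icc] with t ht
      have hb1 : ‖ℓ (F t)‖ ≤ (1 + ε) * ‖h t‖ := by
        rw [Real.norm_eq_abs]
        exact hcal₁ (γ t) (hγW t ht) (h t)
      calc (‖ℓ (F t)‖₊ : ℝ≥0∞) = ENNReal.ofReal ‖ℓ (F t)‖ :=
            (ofReal_norm _).symm
        _ ≤ ENNReal.ofReal ((1 + ε) * ‖h t‖) := ENNReal.ofReal_le_ofReal hb1
        _ = ENNReal.ofReal (1 + ε) * ENNReal.ofReal ‖h t‖ :=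
            ENNReal.ofReal_mul (by linarith)
        _ = ENNReal.ofReal (1 + ε) * (‖h t‖₊ : ℝ≥0∞) := by
            rw [ofReal_norm, enorm_eq_nnnorm]
    calc (∫⁻ t in Icc a b, (‖ℓ (F t)‖₊ : ℝ≥0∞)) ≤
        ∫⁻ t in Icc a b, ENNReal.ofReal (1 + ε) * (‖h t‖₊ : ℝ≥0∞) := hmono
      _ = ENNReal.ofReal (1 + ε) * I := by
          rw [lintegral_const_mul' _ _ ENNReal.ofReal_ne_top]
  -- dispose of the infinite case
  rcases eq_or_ne I ⊤ with hItop | hItop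
  · rw [hItop]; exact le_top
  -- ℓ ∘ F is integrable on Icc a b
  have hℓFint : IntegrableOn (fun t => ℓ (F t)) (Icc a b) volume := by
    refine ⟨ℓ.continuous.comp_aestronglyMeasurable hint.1, ?_⟩
    exact lt_of_le_of_lt hkey (ENNReal.mul_lt_top ENNReal.ofReal_lt_top hItop.lt_top)
  -- main estimate in ℝ≥0∞
  have hchain : ENNReal.ofReal ((s₂ - s₁) * (1 - ε ^ 2)) ≤ ENNReal.ofReal (1 + ε) * I := by
    calc ENNReal.ofReal ((s₂ - s₁) * (1 - ε ^ 2))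
        ≤ ENNReal.ofReal (∫ t in Icc a b, ‖ℓ (F t)‖) := by
          refine ENNReal.ofReal_le_ofReal ?_
          calc (s₂ - s₁) * (1 - ε ^ 2) ≤ ∫ t in s₁..s₂, ℓ (F₀ t) := hlow
            _ = ∫ t in a..b, ℓ (F t) := hend
            _ ≤ ∫ t in Icc a b, ‖ℓ (F t)‖ := habs
      _ = ∫⁻ t in Icc a b, (‖ℓ (F t)‖₊ : ℝ≥0∞) :=
          ofReal_integral_norm_eq_lintegral_enorm hℓFint
      _ ≤ ENNReal.ofReal (1 + ε) * I := hkey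
  -- cancel the factor (1 + ε)
  have hfac : ENNReal.ofReal ((s₂ - s₁) * (1 - ε ^ 2)) =
      ENNReal.ofReal (1 + ε) * ENNReal.ofReal ((s₂ - s₁) * (1 - ε)) := by
    rw [← ENNReal.ofReal_mul (by linarith)]
    congr 1
    ring
  rw [hfac] at hchain
  exact (ENNReal.mul_le_mul_iff_right (by simp; linarith) ENNReal.ofReal_ne_top).mp hchain

end
end
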